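/- arXiv:math/0701351 — 3 statements merged into one kernel-verified Lean document; each statement's English description precedes it below -/
import Mathlib

section
/- Let d be a squarefree negative integer and K = ℚ(√d). Then the quaternion algebra (−1,−3/K) is a division ring if and only if d ≡ 1 (mod 3). -/
open Quaternion
open NumberTheorySymbols

private lemma sq3 {x y : ℤ} (h : (3:ℤ) ∣ x^2 + y^2) : (3:ℤ) ∣ x ∧ (3:ℤ) ∣ y := by
  have key : ∀ u v : ZMod 3, u^2 + v^2 = 0 → u = 0 ∧ v = 0 := by decide
  have hx : ((x : ZMod 3))^2 + ((y : ZMod 3))^2 = 0 := by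
    have : (((x^2 + y^2 : ℤ)) : ZMod 3) = 0 := by
      rw [ZMod.intCast_zmod_eq_zero_iff_dvd]; exact_mod_cast h
    push_cast at this; exact this
  obtain ⟨h1, h2⟩ := key _ _ hx
  constructor
  · exact_mod_cast (ZMod.intCast_zmod_eq_zero_iff_dvd x 3).mp h1
  · exact_mod_cast (ZMod.intCast_zmod_eq_zero_iff_dvd y 3).mp h2

private lemma step_aux (d s a0 a1 a2 a3 b0 b1 b2 b3 : ℤ)
    (hs9 : (9:ℤ) ∣ s^2 - d)
    (h1 : a0^2+a1^2+3*a2^2+3*a3^2 + d*(b0^2+b1^2+3*b2^2+3*b3^2) = 0)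
    (h2 : a0*b0+a1*b1+3*a2*b2+3*a3*b3 = 0) :
    (3:ℤ) ∣ (a0 + s*b0) ∧ (3:ℤ) ∣ (a1 + s*b1) ∧ (3:ℤ) ∣ (a2 + s*b2) ∧ (3:ℤ) ∣ (a3 + s*b3) := by
  obtain ⟨k, hk⟩ := hs9
  set u0 := a0 + s*b0; set u1 := a1 + s*b1; set u2 := a2 + s*b2; set u3 := a3 + s*b3
  have h9 : u0^2 + u1^2 + 3*u2^2 + 3*u3^2 = 9*(k*(b0^2+b1^2+3*b2^2+3*b3^2)) := by
    simp only [u0, u1, u2, u3]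
    linear_combination h1 + (2*s)*h2 + (b0^2+b1^2+3*b2^2+3*b3^2)*hk
  have h3a : (3:ℤ) ∣ u0^2 + u1^2 := by
    have : u0^2 + u1^2 = 9*(k*(b0^2+b1^2+3*b2^2+3*b3^2)) - 3*(u2^2 + u3^2) := by linarith
    rw [this]; exact dvd_sub ⟨3*(k*(b0^2+b1^2+3*b2^2+3*b3^2)), by ring⟩ ⟨u2^2+u3^2, by ring⟩
  obtain ⟨h01, h02⟩ := sq3 h3a
  obtain ⟨c0, hc0⟩ := h01; obtain ⟨c1, hc1⟩ := h02
  have h3b : (3:ℤ) ∣ u2^2 + u3^2 := by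
    have h9' : 9 ∣ 3*(u2^2 + u3^2) := by
      have : 3*(u2^2+u3^2) = 9*(k*(b0^2+b1^2+3*b2^2+3*b3^2)) - 9*(c0^2 + c1^2) := by
        rw [hc0, hc1] at h9; linarith
      rw [this]
      exact dvd_sub ⟨k*(b0^2+b1^2+3*b2^2+3*b3^2), rfl⟩ ⟨c0^2+c1^2, rfl⟩
    omega
  obtain ⟨h21, h22⟩ := sq3 h3b
  exact ⟨⟨c0, hc0⟩, ⟨c1, hc1⟩, h21, h22⟩

private lemma step (d a0 a1 a2 a3 b0 b1 b2 b3 : ℤ) (hd : d % 3 = 1)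
    (h1 : a0^2+a1^2+3*a2^2+3*a3^2 + d*(b0^2+b1^2+3*b2^2+3*b3^2) = 0)
    (h2 : a0*b0+a1*b1+3*a2*b2+3*a3*b3 = 0) :
    ∃ c0 c1 c2 c3 e0 e1 e2 e3 : ℤ, a0 = 3*c0 ∧ a1 = 3*c1 ∧ a2 = 3*c2 ∧ a3 = 3*c3
      ∧ b0 = 3*e0 ∧ b1 = 3*e1 ∧ b2 = 3*e2 ∧ b3 = 3*e3 := by
  have hs : ∃ s : ℤ, (9:ℤ) ∣ s^2 - d ∧ ¬ (3:ℤ) ∣ s := by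
    have h9 : d % 9 = 1 ∨ d % 9 = 4 ∨ d % 9 = 7 := by omega
    rcases h9 with h | h | h
    · exact ⟨1, by omega, by decide⟩
    · exact ⟨2, by omega, by decide⟩
    · exact ⟨4, by omega, by decide⟩
  obtain ⟨s, hs9, hs3⟩ := hs
  obtain ⟨hu0, hu1, hu2, hu3⟩ := step_aux d s a0 a1 a2 a3 b0 b1 b2 b3 hs9 h1 h2
  have hs9' : (9:ℤ) ∣ (-s)^2 - d := by
    have h : (-s)^2 - d = s^2 - d := by ring
    rw [h]; exact hs9
  obtain ⟨hv0, hv1, hv2, hv3⟩ := step_aux d (-s) a0 a1 a2 a3 b0 b1 b2 b3 hs9' h1 h2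
  have key : ∀ a b : ℤ, (3:ℤ) ∣ (a + s*b) → (3:ℤ) ∣ (a + (-s)*b) → (3 ∣ a ∧ 3 ∣ b) := by
    intro a b hab1 hab2
    have h2a : (3:ℤ) ∣ 2*a := by
      have : 2*a = (a + s*b) + (a + (-s)*b) := by ring
      rw [this]; exact dvd_add hab1 hab2
    have h2b : (3:ℤ) ∣ 2*(s*b) := by
      have : 2*(s*b) = (a + s*b) - (a + (-s)*b) := by ring
      rw [this]; exact dvd_sub hab1 hab2
    have ha : (3:ℤ) ∣ a := by omega
    have hsb : (3:ℤ) ∣ s*b := by omega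
    have hb : (3:ℤ) ∣ b := by
      rcases (Int.prime_three.dvd_mul.mp hsb) with h | h
      · exact absurd h hs3
      · exact h
    exact ⟨ha, hb⟩
  obtain ⟨ha0, hb0⟩ := key a0 b0 hu0 hv0
  obtain ⟨ha1, hb1⟩ := key a1 b1 hu1 hv1
  obtain ⟨ha2, hb2⟩ := key a2 b2 hu2 hv2
  obtain ⟨ha3, hb3⟩ := key a3 b3 hu3 hv3
  obtain ⟨c0, hc0⟩ := ha0; obtain ⟨c1, hc1⟩ := ha1; obtain ⟨c2, hc2⟩ := ha2; obtain ⟨c3, hc3⟩ := ha3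
  obtain ⟨e0, he0⟩ := hb0; obtain ⟨e1, he1⟩ := hb1; obtain ⟨e2, he2⟩ := hb2; obtain ⟨e3, he3⟩ := hb3
  exact ⟨c0, c1, c2, c3, e0, e1, e2, e3, hc0, hc1, hc2, hc3, he0, he1, he2, he3⟩

set_option maxHeartbeats 1000000 in
private lemma descent (d : ℤ) (hd : d % 3 = 1) :
    ∀ n : ℕ, ∀ a0 a1 a2 a3 b0 b1 b2 b3 : ℤ,
    a0.natAbs + a1.natAbs + a2.natAbs + a3.natAbs + b0.natAbs + b1.natAbs + b2.natAbs + b3.natAbs ≤ n →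
    a0^2+a1^2+3*a2^2+3*a3^2 + d*(b0^2+b1^2+3*b2^2+3*b3^2) = 0 →
    a0*b0+a1*b1+3*a2*b2+3*a3*b3 = 0 →
    a0 = 0 ∧ a1 = 0 ∧ a2 = 0 ∧ a3 = 0 ∧ b0 = 0 ∧ b1 = 0 ∧ b2 = 0 ∧ b3 = 0 := by
  intro n
  induction n with
  | zero =>
    intro a0 a1 a2 a3 b0 b1 b2 b3 hsum _ _
    refine ⟨?_, ?_, ?_, ?_, ?_, ?_, ?_, ?_⟩ <;> omega
  | succ n ih =>
    intro a0 a1 a2 a3 b0 b1 b2 b3 hsum h1 h2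
    obtain ⟨c0, c1, c2, c3, e0, e1, e2, e3, rfl, rfl, rfl, rfl, rfl, rfl, rfl, rfl⟩ :=
      step d a0 a1 a2 a3 b0 b1 b2 b3 hd h1 h2
    have h1' : c0^2+c1^2+3*c2^2+3*c3^2 + d*(e0^2+e1^2+3*e2^2+3*e3^2) = 0 := by
      have h9 : (9:ℤ) * (c0^2+c1^2+3*c2^2+3*c3^2 + d*(e0^2+e1^2+3*e2^2+3*e3^2)) = 0 := by
        linear_combination h1
      have := mul_eq_zero.mp h9
      simpa using this
    have h2' : c0*e0+c1*e1+3*c2*e2+3*c3*e3 = 0 := by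
      have h9 : (9:ℤ) * (c0*e0+c1*e1+3*c2*e2+3*c3*e3) = 0 := by linear_combination h2
      have := mul_eq_zero.mp h9
      simpa using this
    have hsum' : c0.natAbs + c1.natAbs + c2.natAbs + c3.natAbs + e0.natAbs + e1.natAbs + e2.natAbs + e3.natAbs ≤ n := by
      simp only [Int.natAbs_mul] at hsum
      norm_num at hsum
      omega
    obtain ⟨g0, g1, g2, g3, f0, f1, f2, f3⟩ := ih c0 c1 c2 c3 e0 e1 e2 e3 hsum' h1' h2'
    subst g0 g1 g2 g3 f0 f1 f2 f3
    norm_num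

lemma descent_final (d : ℤ) (hd : d % 3 = 1) (a0 a1 a2 a3 b0 b1 b2 b3 : ℤ)
    (h1 : a0^2+a1^2+3*a2^2+3*a3^2 + d*(b0^2+b1^2+3*b2^2+3*b3^2) = 0)
    (h2 : a0*b0+a1*b1+3*a2*b2+3*a3*b3 = 0) :
    a0 = 0 ∧ a1 = 0 ∧ a2 = 0 ∧ a3 = 0 ∧ b0 = 0 ∧ b1 = 0 ∧ b2 = 0 ∧ b3 = 0 :=
  descent d hd _ a0 a1 a2 a3 b0 b1 b2 b3 le_rfl h1 h2

set_option maxHeartbeats 1000000 in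
theorem legendre_ternary (A B C ρ σ τ : ℤ) (hA : 0 < A) (hB : 0 < B) (hC : 0 < C)
    (hAB : IsCoprime A B) (hAC : IsCoprime A C) (hBC : IsCoprime B C)
    (hsBC : Squarefree (B*C)) (hsAB : Squarefree (A*B))
    (hab1 : 1 < A*B) (hbc1 : 1 < B*C)
    (hρ : C ∣ ρ^2 + A*B) (hσ : B ∣ σ^2 - A*C) (hτ : A ∣ τ^2 - B*C) :
    ∃ x y z : ℤ, A*x^2 + B*y^2 = C*z^2 ∧ ¬(x = 0 ∧ y = 0 ∧ z = 0) := by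
  -- natural number versions
  set na := A.toNat with hna_def
  set nb := B.toNat with hnb_def
  set nc := C.toNat with hnc_def
  have hna : (na:ℤ) = A := Int.toNat_of_nonneg hA.le
  have hnb : (nb:ℤ) = B := Int.toNat_of_nonneg hB.le
  have hnc : (nc:ℤ) = C := Int.toNat_of_nonneg hC.le
  have hna0 : 0 < na := by omega
  have hnb0 : 0 < nb := by omega
  have hnc0 : 0 < nc := by omega
  haveI : NeZero na := ⟨by omega⟩
  haveI : NeZero nb := ⟨by omega⟩
  haveI : NeZero nc := ⟨by omega⟩
  set m1 := Nat.sqrt (nb*nc) with hm1_def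
  set m2 := Nat.sqrt (na*nc) with hm2_def
  set m3 := Nat.sqrt (na*nb) with hm3_def
  set S : Finset (ℕ × ℕ × ℕ) :=
    Finset.range (m1+1) ×ˢ Finset.range (m2+1) ×ˢ Finset.range (m3+1) with hS_def
  have hScard : S.card = (m1+1) * ((m2+1) * (m3+1)) := by
    simp [hS_def]
  have hcard_lt : Fintype.card (ZMod nc × ZMod nb × ZMod na) < S.card := by
    have e1 : Fintype.card (ZMod nc × ZMod nb × ZMod na) = nc * (nb * na) := by
      simp [ZMod.card]
    rw [e1, hScard]
    have q1 : nb*nc < (m1+1)^2 := Nat.lt_succ_sqrt' _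
    have q2 : na*nc < (m2+1)^2 := Nat.lt_succ_sqrt' _
    have q3 : na*nb < (m3+1)^2 := Nat.lt_succ_sqrt' _
    have key : (nc * (nb * na))^2 < ((m1+1) * ((m2+1) * (m3+1)))^2 := by
      calc (nc * (nb * na))^2 = (nb*nc) * ((na*nc) * (na*nb)) := by ring
        _ < (m1+1)^2 * ((m2+1)^2 * (m3+1)^2) := by
            apply Nat.mul_lt_mul'' q1
            apply Nat.mul_lt_mul'' q2 q3
        _ = ((m1+1) * ((m2+1) * (m3+1)))^2 := by ring
    by_contra hcon
    push_neg at hcon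
    have := Nat.pow_le_pow_left hcon 2
    omega
  set f : ℕ × ℕ × ℕ → ZMod nc × ZMod nb × ZMod na := fun t =>
    ( ((A*(t.1:ℤ) + ρ*(t.2.1:ℤ) : ℤ) : ZMod nc),
      ((A*(t.1:ℤ) - σ*(t.2.2:ℤ) : ℤ) : ZMod nb),
      ((B*(t.2.1:ℤ) - τ*(t.2.2:ℤ) : ℤ) : ZMod na) ) with hf_def
  obtain ⟨u, hu, v, hv, huv, hfe⟩ :=
    Finset.exists_ne_map_eq_of_card_lt_of_maps_to
      (t := (Finset.univ : Finset (ZMod nc × ZMod nb × ZMod na)))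
      (by rw [Finset.card_univ]; exact hcard_lt) (fun x _ => Finset.mem_univ (f x))
  simp only [hS_def, Finset.mem_product, Finset.mem_range] at hu hv
  set x := (u.1:ℤ) - (v.1:ℤ) with hx_def
  set y := (u.2.1:ℤ) - (v.2.1:ℤ) with hy_def
  set z := (u.2.2:ℤ) - (v.2.2:ℤ) with hz_def
  -- congruences
  have hcong : ∀ (e1 e2 : ℤ) (n : ℕ), ((e1 : ZMod n) = (e2 : ZMod n)) → (n:ℤ) ∣ e1 - e2 := by
    intro e1 e2 n h
    rw [← ZMod.intCast_zmod_eq_zero_iff_dvd]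
    push_cast
    rw [sub_eq_zero]
    exact h
  have hd1 : C ∣ A*x + ρ*y := by
    have h1 := congrArg Prod.fst hfe
    simp only [hf_def] at h1
    have := hcong _ _ nc h1
    rw [hnc] at this
    have e : (A*(u.1:ℤ) + ρ*(u.2.1:ℤ)) - (A*(v.1:ℤ) + ρ*(v.2.1:ℤ)) = A*x + ρ*y := by
      rw [hx_def, hy_def]; ring
    rwa [e] at this
  have hd2 : B ∣ A*x - σ*z := by
    have h1 := congrArg (fun p => p.2.1) hfe
    simp only [hf_def] at h1
    have := hcong _ _ nb h1
    rw [hnb] at this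
    have e : (A*(u.1:ℤ) - σ*(u.2.2:ℤ)) - (A*(v.1:ℤ) - σ*(v.2.2:ℤ)) = A*x - σ*z := by
      rw [hx_def, hz_def]; ring
    rwa [e] at this
  have hd3 : A ∣ B*y - τ*z := by
    have h1 := congrArg (fun p => p.2.2) hfe
    simp only [hf_def] at h1
    have := hcong _ _ na h1
    rw [hna] at this
    have e : (B*(u.2.1:ℤ) - τ*(u.2.2:ℤ)) - (B*(v.2.1:ℤ) - τ*(v.2.2:ℤ)) = B*y - τ*z := by
      rw [hy_def, hz_def]; ring
    rwa [e] at this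
  set Q := A*x^2 + B*y^2 - C*z^2 with hQ_def
  have hQC : C ∣ Q := by
    have key : A*Q = (A*x + ρ*y)*(A*x - ρ*y) + (ρ^2 + A*B)*y^2 - C*(A*z^2) := by
      rw [hQ_def]; ring
    have : C ∣ A*Q := by
      rw [key]
      exact dvd_sub (dvd_add (Dvd.dvd.mul_right hd1 _) (Dvd.dvd.mul_right hρ _))
        ⟨A*z^2, by ring⟩
    exact (hAC.symm).dvd_of_dvd_mul_left this
  have hQB : B ∣ Q := by
    have key : A*Q = (A*x - σ*z)*(A*x + σ*z) + (σ^2 - A*C)*z^2 + A*(B*y^2) := by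
      rw [hQ_def]; ring
    have : B ∣ A*Q := by
      rw [key]
      exact dvd_add (dvd_add (Dvd.dvd.mul_right hd2 _) (Dvd.dvd.mul_right hσ _))
        ⟨A*y^2, by ring⟩
    exact (hAB.symm).dvd_of_dvd_mul_left this
  have hQA : A ∣ Q := by
    have key : B*Q = (B*y - τ*z)*(B*y + τ*z) + (τ^2 - B*C)*z^2 + B*(A*x^2) := by
      rw [hQ_def]; ring
    have : A ∣ B*Q := by
      rw [key]
      exact dvd_add (dvd_add (Dvd.dvd.mul_right hd3 _) (Dvd.dvd.mul_right hτ _))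
        ⟨B*x^2, by ring⟩
    exact (hAB).dvd_of_dvd_mul_left this
  have hQABC : A*B*C ∣ Q := by
    have h1 : A*B ∣ Q := hAB.mul_dvd hQA hQB
    exact (hAC.mul_left hBC).mul_dvd h1 hQC
  -- bounds
  have hxb : x^2 ≤ B*C := by
    have h1 : x^2 ≤ (m1:ℤ)^2 := by
      have := hu.1; have := hv.1
      rw [hx_def]
      have l1 : (u.1:ℤ) ≤ m1 := by exact_mod_cast Nat.lt_succ_iff.mp hu.1
      have l2 : (v.1:ℤ) ≤ m1 := by exact_mod_cast Nat.lt_succ_iff.mp hv.1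
      nlinarith [Int.natCast_nonneg u.1, Int.natCast_nonneg v.1]
    have h2 : (m1:ℤ)^2 ≤ B*C := by
      rw [← hnb, ← hnc]
      exact_mod_cast Nat.sqrt_le' (nb*nc)
    linarith
  have hyb : y^2 ≤ A*C := by
    have h1 : y^2 ≤ (m2:ℤ)^2 := by
      rw [hy_def]
      have l1 : (u.2.1:ℤ) ≤ m2 := by exact_mod_cast Nat.lt_succ_iff.mp hu.2.1
      have l2 : (v.2.1:ℤ) ≤ m2 := by exact_mod_cast Nat.lt_succ_iff.mp hv.2.1
      nlinarith [Int.natCast_nonneg u.2.1, Int.natCast_nonneg v.2.1]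
    have h2 : (m2:ℤ)^2 ≤ A*C := by
      rw [← hna, ← hnc]
      exact_mod_cast Nat.sqrt_le' (na*nc)
    linarith
  have hzb : z^2 ≤ A*B := by
    have h1 : z^2 ≤ (m3:ℤ)^2 := by
      rw [hz_def]
      have l1 : (u.2.2:ℤ) ≤ m3 := by exact_mod_cast Nat.lt_succ_iff.mp hu.2.2
      have l2 : (v.2.2:ℤ) ≤ m3 := by exact_mod_cast Nat.lt_succ_iff.mp hv.2.2
      nlinarith [Int.natCast_nonneg u.2.2, Int.natCast_nonneg v.2.2]
    have h2 : (m3:ℤ)^2 ≤ A*B := by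
      rw [← hna, ← hnb]
      exact_mod_cast Nat.sqrt_le' (na*nb)
    linarith
  -- strictness from squarefreeness
  have hxs : x^2 ≠ B*C := by
    intro h
    have : x*x ∣ B*C := ⟨1, by rw [← h]; ring⟩
    have hux := hsBC x this
    rcases Int.isUnit_iff.mp hux with h1 | h1 <;> rw [h1] at h <;> omega
  have hzs : z^2 ≠ A*B := by
    intro h
    have : z*z ∣ A*B := ⟨1, by rw [← h]; ring⟩
    have huz := hsAB z this
    rcases Int.isUnit_iff.mp huz with h1 | h1 <;> rw [h1] at h <;> omega
  have hxlt : x^2 < B*C := lt_of_le_of_ne hxb hxs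
  have hzlt : z^2 < A*B := lt_of_le_of_ne hzb hzs
  -- Q is 0 or ABC
  have hQub : Q < 2*(A*B*C) := by
    have t1 : A*x^2 ≤ A*(B*C-1) := mul_le_mul_of_nonneg_left (by omega) hA.le
    have t2 : B*y^2 ≤ B*(A*C) := mul_le_mul_of_nonneg_left hyb hB.le
    have t3 : 0 ≤ C*z^2 := by positivity
    rw [hQ_def]; nlinarith
  have hQlb : -(A*B*C) < Q := by
    have t1 : C*z^2 ≤ C*(A*B-1) := mul_le_mul_of_nonneg_left (by omega) hC.le
    have t2 : 0 ≤ A*x^2 := by positivity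
    have t3 : 0 ≤ B*y^2 := by positivity
    rw [hQ_def]; nlinarith
  obtain ⟨k, hk⟩ := hQABC
  have hABCpos : 0 < A*B*C := by positivity
  have hk01 : k = 0 ∨ k = 1 := by
    by_contra hcon
    push_neg at hcon
    rcases lt_trichotomy k 0 with h | h | h
    · have : A*B*C*k ≤ A*B*C*(-1) := mul_le_mul_of_nonneg_left (by omega) hABCpos.le
      rw [← hk] at this
      linarith
    · exact hcon.1 h
    · have hk2 : 2 ≤ k := by omega
      have : A*B*C*2 ≤ A*B*C*k := mul_le_mul_of_nonneg_left hk2 hABCpos.le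
      rw [← hk] at this
      linarith
  have hne : ¬(x = 0 ∧ y = 0 ∧ z = 0) := by
    rintro ⟨h1, h2, h3⟩
    apply huv
    have e1 : u.1 = v.1 := by omega
    have e2 : u.2.1 = v.2.1 := by omega
    have e3 : u.2.2 = v.2.2 := by omega
    exact Prod.ext e1 (Prod.ext e2 e3)
  rcases hk01 with h | h
  · refine ⟨x, y, z, ?_, hne⟩
    rw [h, mul_zero] at hk
    rw [hQ_def] at hk
    linarith
  · rw [h, mul_one] at hk
    refine ⟨x*z + B*y, y*z - A*x, z^2 + A*B, ?_, ?_⟩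
    · linear_combination (z^2 + A*B) * hk
    · rintro ⟨-, -, h3⟩
      have : 0 < z^2 + A*B := by positivity
      omega

-- find a prime in a prescribed congruence class
lemma find_prime (n' : ℕ) (ho : Odd n') (h3 : ¬ 3 ∣ n') (b8 b3 : ℕ)
    (hb8 : b8 = 1 ∨ b8 = 5) (hb3 : b3 % 3 = 1 ∨ b3 % 3 = 2) (N : ℕ) :
    ∃ p : ℕ, N < p ∧ p.Prime ∧ p % 8 = b8 ∧ p % 3 = b3 % 3 ∧ n' ∣ 3*p+1 := by
  have hn'0 : 0 < n' := ho.pos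
  have hcop3 : Nat.Coprime 3 n' := (Nat.Prime.coprime_iff_not_dvd Nat.prime_three).mpr h3
  haveI : NeZero n' := ⟨hn'0.ne'⟩
  -- u : inverse of -3 mod n'
  set u : ℕ := (-(3 : ZMod n')⁻¹).val with hu_def
  have hu : n' ∣ 3*u + 1 := by
    rw [← ZMod.natCast_eq_zero_iff]
    push_cast
    rw [hu_def, ZMod.natCast_zmod_val]
    have h1 : (3 : ZMod n') * (3 : ZMod n')⁻¹ = 1 := by
      have := ZMod.coe_mul_inv_eq_one (n := n') 3 hcop3
      simpa using this
    linear_combination -h1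
  -- CRT
  have hcop3n : Nat.Coprime 3 n' := hcop3
  obtain ⟨r1, hr1a, hr1b⟩ := Nat.chineseRemainder hcop3n b3 u
  have hcop8 : Nat.Coprime 8 (3*n') := by
    have h2 : Nat.Coprime 2 (3*n') := by
      rw [Nat.coprime_two_left]
      exact Odd.mul (by decide) ho
    have : (8:ℕ) = 2^3 := by norm_num
    rw [this]
    exact Nat.Coprime.pow_left _ h2
  obtain ⟨r, hra, hrb⟩ := Nat.chineseRemainder hcop8 b8 r1
  -- r is coprime to 8*(3*n')
  have hrmod3 : r ≡ b3 [MOD 3] := ((hrb.of_dvd (dvd_mul_right 3 n')).trans hr1a)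
  have hrmodn' : r ≡ u [MOD n'] := ((hrb.of_dvd (dvd_mul_left n' 3)).trans hr1b)
  have hrdvd : n' ∣ 3*r + 1 := by
    have : 3*r + 1 ≡ 3*u + 1 [MOD n'] := Nat.ModEq.add_right 1 (Nat.ModEq.mul_left 3 hrmodn')
    exact (Nat.modEq_zero_iff_dvd).mp ((this.trans ((Nat.modEq_zero_iff_dvd).mpr hu)))
  have hrcop : Nat.Coprime r (8*(3*n')) := by
    have c8 : Nat.Coprime r 8 := by
      have hodd : Odd r := by
        have : r % 8 = b8 := by
          have := hra; unfold Nat.ModEq at this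
          rcases hb8 with h | h <;> rw [h] at this ⊢ <;> omega
        rcases hb8 with h | h <;> rw [h] at this <;> rw [Nat.odd_iff] <;> omega
      have h2 : Nat.Coprime r 2 := Nat.coprime_two_right.mpr hodd
      have : (8:ℕ) = 2^3 := by norm_num
      rw [this]
      exact Nat.Coprime.pow_right _ h2
    have c3 : Nat.Coprime r 3 := by
      have hmod : r % 3 = b3 % 3 := hrmod3
      rw [Nat.coprime_comm]
      refine (Nat.Prime.coprime_iff_not_dvd Nat.prime_three).mpr ?_
      intro hdvd
      obtain ⟨k, hk⟩ := hdvd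
      omega
    have cn' : Nat.Coprime r n' := by
      have hg : Nat.gcd r n' ∣ 1 := by
        have h1 : Nat.gcd r n' ∣ 3*r + 1 := dvd_trans (Nat.gcd_dvd_right r n') hrdvd
        have h2 : Nat.gcd r n' ∣ 3*r := Dvd.dvd.mul_left (Nat.gcd_dvd_left r n') 3
        have := Nat.dvd_sub h1 h2
        simpa using this
      exact Nat.dvd_one.mp hg
    exact Nat.Coprime.mul_right c8 (Nat.Coprime.mul_right c3 cn')
  -- Dirichlet
  haveI : NeZero (8*(3*n')) := ⟨by positivity⟩
  have hunit : IsUnit ((r : ℕ) : ZMod (8*(3*n'))) := by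
    rw [ZMod.isUnit_iff_coprime]
    exact hrcop
  obtain ⟨p, hpN, hpp, hpr⟩ := Nat.forall_exists_prime_gt_and_eq_mod hunit N
  have hpmod : p ≡ r [MOD 8*(3*n')] := (ZMod.natCast_eq_natCast_iff _ _ _).mp hpr
  refine ⟨p, hpN, hpp, ?_, ?_, ?_⟩
  · have h8 : p ≡ b8 [MOD 8] := (hpmod.of_dvd (dvd_mul_right 8 (3*n'))).trans hra
    unfold Nat.ModEq at h8
    rcases hb8 with h | h <;> rw [h] at h8 ⊢ <;> omega
  · exact ((hpmod.of_dvd (dvd_mul_of_dvd_right (dvd_mul_right 3 n') 8)).trans hrmod3)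
  · have hpn' : p ≡ r [MOD n'] := hpmod.of_dvd (dvd_mul_of_dvd_right (dvd_mul_left n' 3) 8)
    have : 3*p + 1 ≡ 3*r + 1 [MOD n'] := Nat.ModEq.add_right 1 (Nat.ModEq.mul_left 3 hpn')
    exact (Nat.modEq_zero_iff_dvd).mp (this.trans ((Nat.modEq_zero_iff_dvd).mpr hrdvd))

-- J(-3 | m) for odd m coprime to 3
lemma jacobi_neg_three (m : ℕ) (hm : Odd m) (h3 : ¬ 3 ∣ m) :
    J((-3 : ℤ) | m) = if m % 3 = 1 then 1 else -1 := by
  have key : J((-3:ℤ) | m) = J((m:ℤ) | 3) := by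
    have hneg : J((-3:ℤ) | m) = ZMod.χ₄ m * J((3:ℤ) | m) := by
      have := jacobiSym.neg 3 hm
      simpa using this
    have h4 : m % 4 = 1 ∨ m % 4 = 3 := Nat.odd_mod_four_iff.mp (Nat.odd_iff.mp hm)
    rcases h4 with h | h
    · have hr : J(((3:ℕ):ℤ) | m) = J(((m:ℕ):ℤ) | 3) :=
        jacobiSym.quadratic_reciprocity_one_mod_four' (by decide) h
      rw [hneg, ZMod.χ₄_nat_one_mod_four h]
      simpa using hr
    · have hr : J(((3:ℕ):ℤ) | m) = -J(((m:ℕ):ℤ) | 3) :=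
        jacobiSym.quadratic_reciprocity_three_mod_four (by decide) h
      rw [hneg, ZMod.χ₄_nat_three_mod_four h]
      push_cast at hr
      rw [hr]
      ring
  rw [key]
  have hm3 : m % 3 = 1 ∨ m % 3 = 2 := by omega
  have hmod : J((m:ℤ) | 3) = J(((m % 3 : ℕ) : ℤ) | 3) := by
    rw [jacobiSym.mod_left]
    norm_cast
  rcases hm3 with h | h
  · rw [if_pos h, hmod, h]
    exact jacobiSym.one_left 3
  · rw [if_neg (by omega), hmod, h]
    have : J((2:ℤ) | 3) = ZMod.χ₈ 3 := jacobiSym.at_two (by decide)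
    rw [show (((2:ℕ)):ℤ) = (2:ℤ) by norm_num, this]
    decide

lemma jacobi_mod_three (m : ℕ) (h3 : ¬ (3:ℕ) ∣ m) :
    J((m:ℤ) | 3) = if m % 3 = 1 then 1 else -1 := by
  have hm3 : m % 3 = 1 ∨ m % 3 = 2 := by omega
  have hmod : J((m:ℤ) | 3) = J(((m % 3 : ℕ) : ℤ) | 3) := by
    rw [jacobiSym.mod_left]
    norm_cast
  rcases hm3 with h | h
  · rw [if_pos h, hmod, h]
    exact jacobiSym.one_left 3
  · rw [if_neg (by omega), hmod, h]
    have h2 : J((2:ℤ) | 3) = ZMod.χ₈ 3 := jacobiSym.at_two (by decide)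
    rw [show (((2:ℕ)):ℤ) = (2:ℤ) by norm_num, h2]
    decide


set_option maxHeartbeats 1000000 in
lemma case_one (n : ℕ) (hn0 : 0 < n) (hsf : Squarefree n) (hn3 : n % 3 = 1) :
    ∃ x y z w : ℤ, w ≠ 0 ∧ x^2 + y^2 + 3*z^2 = 3*(n:ℤ)*w^2 := by
  -- decompose n = 2^e * n'
  obtain ⟨e, n', he1, ho, hn⟩ : ∃ e n', e ≤ 1 ∧ Odd n' ∧ n = 2^e * n' := by
    rcases Nat.even_or_odd n with he | ho
    · obtain ⟨k, hk⟩ := he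
      refine ⟨1, k, le_rfl, ?_, by omega⟩
      rcases Nat.even_or_odd k with hek | hok
      · exfalso
        obtain ⟨j, hj⟩ := hek
        have h4 : (2*2) ∣ n := ⟨j, by omega⟩
        exact (by decide : ¬ IsUnit (2:ℕ)) (hsf 2 h4)
      · exact hok
    · exact ⟨0, n, by omega, ho, by ring⟩
  have h3n : ¬ (3:ℕ) ∣ n := by omega
  have h3n' : ¬ (3:ℕ) ∣ n' := fun h => h3n (hn ▸ Dvd.dvd.mul_left h _)
  have hn'0 : 0 < n' := ho.pos
  -- the prime
  obtain ⟨p, hpN, hpp, hp8, hp3, hpdvd⟩ :=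
    find_prime n' ho h3n' (if e = 0 then 1 else 5) 1
      (by rcases Nat.eq_zero_or_pos e with h | h
          · simp [h]
          · right; simp [Nat.pos_iff_ne_zero.mp h])
      (by norm_num) (n + 3)
  haveI : Fact p.Prime := ⟨hpp⟩
  have hp8' : p % 8 = 1 ∨ p % 8 = 5 := by
    rcases Nat.eq_zero_or_pos e with h | h
    · left; simpa [h] using hp8
    · right
      have he0 : e ≠ 0 := by omega
      simpa [he0] using hp8
  have hp4 : p % 4 = 1 := by omega
  have hpodd : Odd p := by rw [Nat.odd_iff]; omega
  have hpgt : n + 3 < p := hpN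
  have hp_ne3 : p ≠ 3 := by omega
  have hcop3n' : Nat.Coprime 3 n' := (Nat.Prime.coprime_iff_not_dvd Nat.prime_three).mpr h3n'
  -- Jacobi symbol computation : J(n | p) = 1
  have hJrecip : J((n':ℤ) | p) = J((p:ℤ) | n') :=
    jacobiSym.quadratic_reciprocity_one_mod_four' ho hp4
  have hJ9 : J((9:ℤ) | n') = 1 := by
    rw [show (9:ℤ) = 3^2 by norm_num]
    apply jacobiSym.sq_one'
    simpa [Int.gcd] using hcop3n'
  have hJflip : J((p:ℤ) | n') = J((-3:ℤ) | n') := by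
    calc J((p:ℤ) | n') = J((9:ℤ) | n') * J((p:ℤ) | n') := by rw [hJ9, one_mul]
      _ = J((9*p:ℤ) | n') := (jacobiSym.mul_left 9 p n').symm
      _ = J((-3:ℤ) | n') := by
          apply jacobiSym.mod_left'
          have hd : (n':ℤ) ∣ (-3:ℤ) - 9*p := by
            have h1 : (n':ℤ) ∣ (3*(p:ℤ)+1) := by exact_mod_cast Int.natCast_dvd_natCast.mpr hpdvd
            have h2 : (-3:ℤ) - 9*p = -3*(3*(p:ℤ)+1) := by ring
            rw [h2]
            exact Dvd.dvd.mul_left h1 _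
          exact Int.modEq_iff_dvd.mpr hd
  have hJn' : J((n':ℤ) | p) = if n' % 3 = 1 then 1 else -1 := by
    rw [hJrecip, hJflip]
    exact jacobi_neg_three n' ho h3n'
  have hJ : J((n:ℤ) | p) = 1 := by
    have expand : J((n:ℤ) | p) = J((2:ℤ) | p)^e * J((n':ℤ) | p) := by
      rw [hn]
      push_cast
      rw [jacobiSym.mul_left, jacobiSym.pow_left]
    rcases Nat.eq_zero_or_pos e with h | h
    · have hnn' : n = n' := by rw [hn, h, pow_zero, one_mul]
      have hn'3 : n' % 3 = 1 := by omega
      rw [expand, h, pow_zero, one_mul, hJn', if_pos hn'3]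
    · have he : e = 1 := by omega
      have hn'3 : n' % 3 = 2 := by
        have : n = 2 * n' := by rw [hn, he]; ring
        omega
      have h2p : J((2:ℤ) | p) = -1 := by
        rw [jacobiSym.at_two hpodd, ZMod.χ₈_nat_mod_eight]
        have hp85 : p % 8 = 5 := by simpa [he] using hp8
        rw [hp85]
        decide
      rw [expand, he, pow_one, h2p, hJn', if_neg (by omega)]
      ring
  -- square root of n mod p, then mod 3p
  have hsq : IsSquare ((n:ℤ) : ZMod p) := ZMod.isSquare_of_jacobiSym_eq_one hJ
  obtain ⟨t, ht⟩ := hsq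
  set s0 : ℤ := (t.val : ℤ) with hs0_def
  have hps0 : (p:ℤ) ∣ s0^2 - n := by
    rw [← ZMod.intCast_zmod_eq_zero_iff_dvd]
    push_cast at ht ⊢
    rw [hs0_def]
    push_cast
    rw [ZMod.natCast_zmod_val, ht]
    ring
  set σ : ℤ := s0 + p*(1 - s0) with hσ_def
  have hσ3 : (3:ℤ) ∣ σ^2 - n := by
    have d1 : (3:ℤ) ∣ 1 - p := by omega
    have d2 : (3:ℤ) ∣ σ - 1 := by
      have e1 : σ - 1 = (s0 - 1)*(1 - p) := by rw [hσ_def]; ring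
      rw [e1]
      exact Dvd.dvd.mul_left d1 _
    have d3 : (3:ℤ) ∣ 1 - n := by omega
    have e2 : σ^2 - n = (σ-1)*(σ+1) + (1 - n) := by ring
    rw [e2]
    exact dvd_add (Dvd.dvd.mul_right d2 _) d3
  have hσp : (p:ℤ) ∣ σ^2 - n := by
    have d2 : (p:ℤ) ∣ σ - s0 := ⟨1 - s0, by rw [hσ_def]; ring⟩
    have e2 : σ^2 - n = (σ-s0)*(σ+s0) + (s0^2 - n) := by ring
    rw [e2]
    exact dvd_add (Dvd.dvd.mul_right d2 _) hps0
  have hσ3p : (3*(p:ℤ)) ∣ σ^2 - n := by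
    have hcop : IsCoprime (3:ℤ) (p:ℤ) := by
      rw [show (3:ℤ) = ((3:ℕ):ℤ) by norm_num]
      rw [Nat.isCoprime_iff_coprime]
      exact (Nat.coprime_primes Nat.prime_three hpp).mpr (by omega)
    exact IsCoprime.mul_dvd hcop hσ3 hσp
  -- divisibility for ρ = 1
  have hρn : (n:ℤ) ∣ 1 + 3*(p:ℤ) := by
    have hnat : n ∣ 3*p + 1 := by
      rcases Nat.eq_zero_or_pos e with h | h
      · rw [hn, h, pow_zero, one_mul]; exact hpdvd
      · have he : e = 1 := by omega
        rw [hn, he, pow_one]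
        refine Nat.Coprime.mul_dvd_of_dvd_of_dvd ?_ ?_ hpdvd
        · exact Nat.coprime_two_left.mpr ho
        · have : p % 2 = 1 := Nat.odd_iff.mp hpodd
          omega
    have := Int.natCast_dvd_natCast.mpr hnat
    push_cast at this
    rwa [add_comm] at this
  -- coprimality and squarefreeness packaging
  have hcop3p : Nat.Coprime 3 p := (Nat.coprime_primes Nat.prime_three hpp).mpr (by omega)
  have hcoppn : Nat.Coprime p n := (Nat.Prime.coprime_iff_not_dvd hpp).mpr
    (fun h => by have := Nat.le_of_dvd hn0 h; omega)
  have hcop3n : Nat.Coprime 3 n := (Nat.Prime.coprime_iff_not_dvd Nat.prime_three).mpr h3n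
  have hcop3pn : Nat.Coprime (3*p) n := Nat.Coprime.mul hcop3n hcoppn
  have hsf3p : Squarefree (3*p) := (Nat.squarefree_mul hcop3p).mpr
    ⟨Nat.prime_three.squarefree, hpp.squarefree⟩
  have hsf3pn : Squarefree (3*p*n) := (Nat.squarefree_mul hcop3pn).mpr ⟨hsf3p, hsf⟩
  -- apply Legendre
  obtain ⟨x, y, z, heq, hnz⟩ := legendre_ternary 1 (3*(p:ℤ)) (n:ℤ) 1 σ 0
    one_pos (by have h2 : (0:ℤ) < (p:ℤ) := by exact_mod_cast hpp.pos
                linarith) (by exact_mod_cast hn0)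
    (isCoprime_one_left) (isCoprime_one_left)
    (by rw [show (3*(p:ℤ)) = ((3*p:ℕ):ℤ) by push_cast; ring]
        exact Nat.isCoprime_iff_coprime.mpr hcop3pn)
    (by rw [show (3*(p:ℤ))*(n:ℤ) = ((3*p*n:ℕ):ℤ) by push_cast; ring]
        exact Int.squarefree_natCast.mpr hsf3pn)
    (by rw [show (1:ℤ)*(3*(p:ℤ)) = ((3*p:ℕ):ℤ) by push_cast; ring]
        exact Int.squarefree_natCast.mpr hsf3p)
    (by have h2 : (2:ℤ) ≤ (p:ℤ) := by exact_mod_cast hpp.two_le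
        nlinarith)
    (by have h2 : (2:ℤ) ≤ (p:ℤ) := by exact_mod_cast hpp.two_le
        have h1 : (1:ℤ) ≤ (n:ℤ) := by exact_mod_cast hn0
        nlinarith)
    (by have e1 : (1:ℤ)^2 + 1*(3*(p:ℤ)) = 1 + 3*p := by ring
        rw [e1]; exact hρn)
    (by have e1 : σ^2 - 1*(n:ℤ) = σ^2 - n := by ring
        rw [e1]; exact hσ3p)
    (one_dvd _)
  -- z ≠ 0
  have hz : z ≠ 0 := by
    intro h
    rw [h] at heq
    have hppos : (0:ℤ) < (p:ℤ) := by exact_mod_cast hpp.pos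
    have hx2 : x^2 = 0 := le_antisymm (by nlinarith [sq_nonneg x, sq_nonneg y]) (sq_nonneg x)
    have hy2 : y^2 = 0 := le_antisymm (by nlinarith [sq_nonneg x, sq_nonneg y]) (sq_nonneg y)
    exact hnz ⟨pow_eq_zero_iff two_ne_zero |>.mp hx2, pow_eq_zero_iff two_ne_zero |>.mp hy2, h⟩
  -- Fermat
  obtain ⟨a, b, hab⟩ := Nat.Prime.sq_add_sq (p := p) (by omega : p % 4 ≠ 3)
  have habZ : ((a:ℤ))^2 + (b:ℤ)^2 = (p:ℤ) := by exact_mod_cast hab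
  refine ⟨3*y*a, 3*y*b, x, z, hz, ?_⟩
  linear_combination 3*heq + 9*y^2*habZ

set_option maxHeartbeats 1000000 in
lemma case_two (n : ℕ) (hn0 : 0 < n) (hsf : Squarefree n) (hn3 : ¬ (3:ℕ) ∣ n) :
    ∃ x y z w : ℤ, w ≠ 0 ∧ x^2 + y^2 + 3*z^2 = 9*(n:ℤ)*w^2 := by
  obtain ⟨e, n', he1, ho, hn⟩ : ∃ e n', e ≤ 1 ∧ Odd n' ∧ n = 2^e * n' := by
    rcases Nat.even_or_odd n with he | ho
    · obtain ⟨k, hk⟩ := he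
      refine ⟨1, k, le_rfl, ?_, by omega⟩
      rcases Nat.even_or_odd k with hek | hok
      · exfalso
        obtain ⟨j, hj⟩ := hek
        have h4 : (2*2) ∣ n := ⟨j, by omega⟩
        exact (by decide : ¬ IsUnit (2:ℕ)) (hsf 2 h4)
      · exact hok
    · exact ⟨0, n, by omega, ho, by ring⟩
  have h3n' : ¬ (3:ℕ) ∣ n' := fun h => hn3 (hn ▸ Dvd.dvd.mul_left h _)
  have hn'0 : 0 < n' := ho.pos
  have hn3' : n % 3 = 1 ∨ n % 3 = 2 := by omega
  obtain ⟨p, hpN, hpp, hp8, hp3, hpdvd⟩ :=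
    find_prime n' ho h3n' (if e = 0 then 1 else 5) n
      (by rcases Nat.eq_zero_or_pos e with h | h
          · simp [h]
          · right; simp [Nat.pos_iff_ne_zero.mp h])
      hn3' (n + 3)
  haveI : Fact p.Prime := ⟨hpp⟩
  have hp8' : p % 8 = 1 ∨ p % 8 = 5 := by
    rcases Nat.eq_zero_or_pos e with h | h
    · left; simpa [h] using hp8
    · right
      have he0 : e ≠ 0 := by omega
      simpa [he0] using hp8
  have hp4 : p % 4 = 1 := by omega
  have hpodd : Odd p := by rw [Nat.odd_iff]; omega
  have hp_ne3 : p ≠ 3 := by omega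
  have hcop3n' : Nat.Coprime 3 n' := (Nat.Prime.coprime_iff_not_dvd Nat.prime_three).mpr h3n'
  -- Jacobi symbol computation: J(3*n | p) = 1
  have hJrecip : J((n':ℤ) | p) = J((p:ℤ) | n') :=
    jacobiSym.quadratic_reciprocity_one_mod_four' ho hp4
  have hJ9 : J((9:ℤ) | n') = 1 := by
    rw [show (9:ℤ) = 3^2 by norm_num]
    apply jacobiSym.sq_one'
    simpa [Int.gcd] using hcop3n'
  have hJflip : J((p:ℤ) | n') = J((-3:ℤ) | n') := by
    calc J((p:ℤ) | n') = J((9:ℤ) | n') * J((p:ℤ) | n') := by rw [hJ9, one_mul]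
      _ = J((9*p:ℤ) | n') := (jacobiSym.mul_left 9 p n').symm
      _ = J((-3:ℤ) | n') := by
          apply jacobiSym.mod_left'
          have h1 : (n':ℤ) ∣ (3*(p:ℤ)+1) := by exact_mod_cast Int.natCast_dvd_natCast.mpr hpdvd
          have hd : (n':ℤ) ∣ (-3:ℤ) - 9*p := by
            have h2 : (-3:ℤ) - 9*p = -3*(3*(p:ℤ)+1) := by ring
            rw [h2]
            exact Dvd.dvd.mul_left h1 _
          exact Int.modEq_iff_dvd.mpr hd
  have hJn' : J((n':ℤ) | p) = if n' % 3 = 1 then 1 else -1 := by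
    rw [hJrecip, hJflip]
    exact jacobi_neg_three n' ho h3n'
  have hJ3p : J((3:ℤ) | p) = if n % 3 = 1 then 1 else -1 := by
    have hr : J(((3:ℕ):ℤ) | p) = J(((p:ℕ):ℤ) | 3) :=
      jacobiSym.quadratic_reciprocity_one_mod_four' (by decide) hp4
    have hmodeq : J((p:ℤ) | 3) = J((n:ℤ) | 3) := by
      apply jacobiSym.mod_left'
      have : (p:ℤ) % 3 = (n:ℤ) % 3 := by omega
      exact this
    have hval := jacobi_mod_three n hn3
    rw [show ((3:ℕ):ℤ) = (3:ℤ) by norm_num] at hr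
    rw [hr, hmodeq, hval]
  have hJ : J((3*(n:ℤ)) | p) = 1 := by
    have expand : J((3*(n:ℤ)) | p) = J((3:ℤ) | p) * (J((2:ℤ) | p)^e * J((n':ℤ) | p)) := by
      rw [hn]
      push_cast
      rw [show (3:ℤ) * (2^e * (n':ℤ)) = 3 * (2^e * n') by ring]
      rw [jacobiSym.mul_left, jacobiSym.mul_left, jacobiSym.pow_left]
    rcases Nat.eq_zero_or_pos e with h | h
    · have hnn' : n = n' := by rw [hn, h, pow_zero, one_mul]
      rw [expand, h, pow_zero, one_mul, hJn', hJ3p, ← hnn']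
      rcases hn3' with h' | h' <;> norm_num [h']
    · have he : e = 1 := by omega
      have hnn' : n = 2 * n' := by rw [hn, he]; ring
      have h2p : J((2:ℤ) | p) = -1 := by
        rw [jacobiSym.at_two hpodd, ZMod.χ₈_nat_mod_eight]
        have hp85 : p % 8 = 5 := by simpa [he] using hp8
        rw [hp85]
        decide
      rw [expand, he, pow_one, h2p, hJn', hJ3p]
      rcases hn3' with h' | h'
      · have hn'2 : n' % 3 = 2 := by omega
        norm_num [h', hn'2]
      · have hn'1 : n' % 3 = 1 := by omega
        norm_num [h', hn'1]
  -- square root of 3n mod p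
  have hsq : IsSquare ((3:ZMod p) * ((n:ℕ) : ZMod p)) := by
    have := ZMod.isSquare_of_jacobiSym_eq_one hJ
    push_cast at this
    exact this
  obtain ⟨t, ht⟩ := hsq
  set σ : ℤ := (t.val : ℤ) with hσ_def
  have hσp : (p:ℤ) ∣ σ^2 - 3*n := by
    rw [← ZMod.intCast_zmod_eq_zero_iff_dvd]
    push_cast at ht ⊢
    rw [hσ_def]
    push_cast
    rw [ZMod.natCast_zmod_val, ht]
    ring
  -- divisibility for ρ = 1
  have hρn : (n:ℤ) ∣ 1 + 3*(p:ℤ) := by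
    have hnat : n ∣ 3*p + 1 := by
      rcases Nat.eq_zero_or_pos e with h | h
      · rw [hn, h, pow_zero, one_mul]; exact hpdvd
      · have he : e = 1 := by omega
        rw [hn, he, pow_one]
        refine Nat.Coprime.mul_dvd_of_dvd_of_dvd ?_ ?_ hpdvd
        · exact Nat.coprime_two_left.mpr ho
        · have : p % 2 = 1 := Nat.odd_iff.mp hpodd
          omega
    have := Int.natCast_dvd_natCast.mpr hnat
    push_cast at this
    rwa [add_comm] at this
  -- tau condition: 3 ∣ 1 - p*n
  have hτ3 : (3:ℤ) ∣ 1 - (p:ℤ)*(n:ℤ) := by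
    have hmodn : (p*n) % 3 = 1 := by
      rw [Nat.mul_mod, hp3]
      rcases hn3' with h | h <;> rw [h] <;> rfl
    have h2 : ((p*n : ℕ):ℤ) % 3 = 1 := by
      have := hmodn
      omega
    push_cast at h2
    omega
  -- coprimality and squarefreeness packaging
  have hcop3p : Nat.Coprime 3 p := (Nat.coprime_primes Nat.prime_three hpp).mpr (by omega)
  have hcoppn : Nat.Coprime p n := (Nat.Prime.coprime_iff_not_dvd hpp).mpr
    (fun h => by have := Nat.le_of_dvd hn0 h; omega)
  have hcop3n : Nat.Coprime 3 n := (Nat.Prime.coprime_iff_not_dvd Nat.prime_three).mpr hn3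
  have hsfpn : Squarefree (p*n) := (Nat.squarefree_mul hcoppn).mpr ⟨hpp.squarefree, hsf⟩
  have hsf3p : Squarefree (3*p) := (Nat.squarefree_mul hcop3p).mpr
    ⟨Nat.prime_three.squarefree, hpp.squarefree⟩
  obtain ⟨x, y, z, heq, hnz⟩ := legendre_ternary 3 ((p:ℤ)) ((n:ℤ)) 1 σ 1
    (by norm_num)
    (by exact_mod_cast hpp.pos)
    (by exact_mod_cast hn0)
    (by rw [show ((3:ℤ)) = ((3:ℕ):ℤ) by norm_num]
        exact Nat.isCoprime_iff_coprime.mpr hcop3p)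
    (by rw [show ((3:ℤ)) = ((3:ℕ):ℤ) by norm_num]
        exact Nat.isCoprime_iff_coprime.mpr hcop3n)
    (Nat.isCoprime_iff_coprime.mpr hcoppn)
    (by rw [show ((p:ℤ))*(n:ℤ) = ((p*n:ℕ):ℤ) by push_cast; ring]
        exact Int.squarefree_natCast.mpr hsfpn)
    (by rw [show (3:ℤ)*(p:ℤ) = ((3*p:ℕ):ℤ) by push_cast; ring]
        exact Int.squarefree_natCast.mpr hsf3p)
    (by have h2 : (2:ℤ) ≤ (p:ℤ) := by exact_mod_cast hpp.two_le
        nlinarith)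
    (by have h2 : (2:ℤ) ≤ (p:ℤ) := by exact_mod_cast hpp.two_le
        have h1 : (1:ℤ) ≤ (n:ℤ) := by exact_mod_cast hn0
        nlinarith)
    (by have e1 : (1:ℤ)^2 + 3*(p:ℤ) = 1 + 3*p := by ring
        rw [e1]; exact hρn)
    (by have e1 : σ^2 - 3*(n:ℤ) = σ^2 - 3*n := by ring
        rw [e1]; exact hσp)
    (by have e1 : (1:ℤ)^2 - (p:ℤ)*(n:ℤ) = 1 - p*n := by ring
        rw [e1]; exact hτ3)
  have hz : z ≠ 0 := by
    intro h
    rw [h] at heq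
    have hppos : (0:ℤ) < (p:ℤ) := by exact_mod_cast hpp.pos
    have hx2 : x^2 = 0 := le_antisymm (by nlinarith [sq_nonneg x, sq_nonneg y]) (sq_nonneg x)
    have hy2 : y^2 = 0 := le_antisymm (by nlinarith [sq_nonneg x, sq_nonneg y]) (sq_nonneg y)
    exact hnz ⟨pow_eq_zero_iff two_ne_zero |>.mp hx2, pow_eq_zero_iff two_ne_zero |>.mp hy2, h⟩
  obtain ⟨a, b, hab⟩ := Nat.Prime.sq_add_sq (p := p) (by omega : p % 4 ≠ 3)
  have habZ : ((a:ℤ))^2 + (b:ℤ)^2 = (p:ℤ) := by exact_mod_cast hab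
  refine ⟨3*y*a, 3*y*b, 3*x, z, hz, ?_⟩
  linear_combination 9*heq + 9*y^2*habZ


lemma star_main (d : ℤ) (hd : Squarefree d) (hneg : d < 0) (h3 : d % 3 ≠ 1) :
    ∃ x y z w : ℤ, w ≠ 0 ∧ x^2+y^2+3*z^2 + 3*d*w^2 = 0 := by
  have hd' : Squarefree (-d) := fun x hx => hd x (dvd_neg.mp hx)
  obtain ⟨n, hn⟩ : ∃ n : ℕ, (n:ℤ) = -d := ⟨(-d).toNat, Int.toNat_of_nonneg (by omega)⟩
  have hn0 : 0 < n := by omega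
  have hnsf : Squarefree n := by
    rw [← Int.squarefree_natCast, hn]
    exact hd'
  have hmod : d % 3 = 0 ∨ d % 3 = 2 := by omega
  rcases hmod with h | h
  · have h3n : (3:ℕ) ∣ n := by omega
    obtain ⟨m, hm⟩ := h3n
    have hm0 : 0 < m := by omega
    have hmsf : Squarefree m := Squarefree.squarefree_of_dvd ⟨3, by omega⟩ hnsf
    have h3m : ¬ (3:ℕ) ∣ m := by
      intro hdvd
      obtain ⟨j, hj⟩ := hdvd
      have h9 : (3*3) ∣ n := ⟨j, by omega⟩
      exact (by decide : ¬ IsUnit (3:ℕ)) (hnsf 3 h9)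
    obtain ⟨x, y, z, w, hw, heq⟩ := case_two m hm0 hmsf h3m
    refine ⟨x, y, z, w, hw, ?_⟩
    have hnm : (n:ℤ) = 3*(m:ℤ) := by exact_mod_cast hm
    have hdm : 3*d = -(9*(m:ℤ)) := by omega
    have : 3*d*w^2 = -(9*(m:ℤ))*w^2 := by rw [hdm]
    rw [this]
    linarith [heq]
  · have hn3 : n % 3 = 1 := by omega
    obtain ⟨x, y, z, w, hw, heq⟩ := case_one n hn0 hnsf hn3
    refine ⟨x, y, z, w, hw, ?_⟩
    have hdn : 3*d = -(3*(n:ℤ)) := by omega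
    have : 3*d*w^2 = -(3*(n:ℤ))*w^2 := by rw [hdn]
    rw [this]
    linarith [heq]

lemma clear_den (q : ℚ) (k : ℕ) (hk : q.den ∣ k) : ∃ m : ℤ, (k:ℚ) * q = (m:ℚ) := by
  obtain ⟨c, hc⟩ := hk
  refine ⟨q.num * c, ?_⟩
  have hden : ((q.den : ℚ)) ≠ 0 := by
    have := q.den_pos
    positivity
  have h1 : q * (q.den : ℚ) = (q.num : ℚ) := by
    have hnd := Rat.num_div_den q
    have h2 : q * (q.den : ℚ) = ((q.num:ℚ)/(q.den:ℚ)) * (q.den:ℚ) := by rw [hnd]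
    rw [div_mul_cancel₀ _ hden] at h2
    exact h2
  rw [hc]
  push_cast
  linear_combination (c:ℚ) * h1

section Field

variable {K : Type} [Field K] [Algebra ℚ K]

-- uniqueness of coordinates in 1, α
lemma coords_unique (d : ℤ) (hdneg : d < 0) (α : K) (hα : α ^ 2 = (d : K))
    (a b : ℚ) (h : algebraMap ℚ K a + algebraMap ℚ K b * α = 0) : a = 0 ∧ b = 0 := by
  have hinj : Function.Injective (algebraMap ℚ K) := (algebraMap ℚ K).injective
  by_cases hb : b = 0
  · subst hb
    simp only [map_zero, zero_mul, add_zero] at h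
    exact ⟨hinj (by rw [h, map_zero]), rfl⟩
  · exfalso
    have hbK : algebraMap ℚ K b ≠ 0 := fun hc => hb (hinj (by rw [hc, map_zero]))
    have hαeq : α = algebraMap ℚ K (-a/b) := by
      rw [map_div₀, map_neg, eq_div_iff hbK]
      linear_combination h
    have hd : ((-a/b)^2 : ℚ) = ((d:ℤ):ℚ) := by
      apply hinj
      rw [map_pow, ← hαeq, hα]
      simp [map_intCast]
    have h1 : ((d:ℤ):ℚ) < 0 := by exact_mod_cast hdneg
    nlinarith [sq_nonneg ((-a/b : ℚ))]

lemma decompose (d : ℤ) (hdneg : d < 0) (α : K) (hα : α ^ 2 = (d : K))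
    (hrank : Module.finrank ℚ K = 2) (x : K) :
    ∃ a b : ℚ, x = algebraMap ℚ K a + algebraMap ℚ K b * α := by
  haveI : FiniteDimensional ℚ K := FiniteDimensional.of_finrank_eq_succ hrank
  have li : LinearIndependent ℚ ![(1:K), α] := by
    rw [LinearIndependent.pair_iff]
    intro s t hst
    apply coords_unique d hdneg α hα s t
    rw [Algebra.smul_def, Algebra.smul_def, mul_one] at hst
    exact hst
  have hspan : Submodule.span ℚ (Set.range ![(1:K), α]) = ⊤ := by
    apply Submodule.eq_top_of_finrank_eq
    rw [finrank_span_eq_card li]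
    simpa using hrank.symm
  have hmem : x ∈ Submodule.span ℚ ({(1:K), α} : Set K) := by
    have : Set.range ![(1:K), α] = {(1:K), α} := by
      simp only [Matrix.range_cons, Matrix.range_empty, Set.union_empty, Set.union_singleton]
      exact Set.pair_comm α 1
    rw [← this, hspan]
    trivial
  obtain ⟨a, b, hab⟩ := Submodule.mem_span_pair.mp hmem
  refine ⟨a, b, ?_⟩
  rw [← hab, Algebra.smul_def, Algebra.smul_def, mul_one]

end Field

set_option maxHeartbeats 1000000 in
/-- Let `d` be a squarefree negative integer and `K = ℚ(√d)`
(i.e. a field extension of `ℚ` of degree 2 containing a square root of `d`).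
Then the quaternion algebra `(−1,−3/K)` is a division ring
if and only if `d ≡ 1 (mod 3)`. -/
theorem quaternion_neg_one_neg_three_division_iff_one_mod_three
    (d : ℤ) (hd : Squarefree d) (hdneg : d < 0)
    (K : Type) [Field K] [Algebra ℚ K]
    (hrank : Module.finrank ℚ K = 2) (α : K) (hα : α ^ 2 = (d : K)) :
    (∀ x : ℍ[K, -1, -3], x ≠ 0 → IsUnit x) ↔ d % 3 = 1 := by
  haveI : CharZero K := (RingHom.charZero_iff (algebraMap ℚ K).injective).mp inferInstance
  have hdK : ((d:ℤ):K) ≠ 0 := Int.cast_ne_zero.mpr (by omega)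
  have hαne : α ≠ 0 := by
    intro h
    apply hdK
    rw [← hα, h]
    norm_num
  constructor
  · -- division implies d ≡ 1 mod 3
    intro H
    by_contra h3
    obtain ⟨x, y, z, w, hw, heq⟩ := star_main d hd hdneg h3
    set Θ : ℍ[K, -1, -3] := ⟨(x:K), (y:K), (z:K), (w:K)*α⟩ with hΘ
    have hwα : (w:K)*α ≠ 0 := mul_ne_zero (Int.cast_ne_zero.mpr hw) hαne
    have hΘne : Θ ≠ 0 := by
      intro h
      apply hwα
      have := congrArg QuaternionAlgebra.imK h
      simpa [hΘ] using this
    have hstarne : star Θ ≠ 0 := by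
      intro h
      apply hwα
      have := congrArg QuaternionAlgebra.imK h
      simp only [hΘ, QuaternionAlgebra.imK_star, QuaternionAlgebra.imK_zero, neg_eq_zero] at this
      exact this
    have heqK : ((x:K))^2 + (y:K)^2 + 3*(z:K)^2 + 3*((d:ℤ):K)*(w:K)^2 = 0 := by
      have := congrArg (fun t : ℤ => (t : K)) heq
      push_cast at this
      convert this using 2 <;> push_cast <;> ring
    have hmul : Θ * star Θ = 0 := by
      ext
      · show (Θ * star Θ).re = (0:ℍ[K,-1,-3]).re
        rw [QuaternionAlgebra.re_mul]
        simp only [hΘ, QuaternionAlgebra.re_star, QuaternionAlgebra.imI_star,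
          QuaternionAlgebra.imJ_star, QuaternionAlgebra.imK_star, QuaternionAlgebra.re_zero,
            zero_mul, add_zero]
        show (x:K) * x + (-1) * y * (-(y:K)) + (-3) * z * (-(z:K))
            - (-1) * (-3) * ((w:K)*α) * (-((w:K)*α)) = 0
        linear_combination heqK + (3*(w:K)^2) * hα
      · show (Θ * star Θ).imI = (0:ℍ[K,-1,-3]).imI
        rw [QuaternionAlgebra.imI_mul]
        simp only [hΘ, QuaternionAlgebra.re_star, QuaternionAlgebra.imI_star,
          QuaternionAlgebra.imJ_star, QuaternionAlgebra.imK_star, QuaternionAlgebra.imI_zero]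
        ring
      · show (Θ * star Θ).imJ = (0:ℍ[K,-1,-3]).imJ
        rw [QuaternionAlgebra.imJ_mul]
        simp only [hΘ, QuaternionAlgebra.re_star, QuaternionAlgebra.imI_star,
          QuaternionAlgebra.imJ_star, QuaternionAlgebra.imK_star, QuaternionAlgebra.imJ_zero]
        ring
      · show (Θ * star Θ).imK = (0:ℍ[K,-1,-3]).imK
        rw [QuaternionAlgebra.imK_mul]
        simp only [hΘ, QuaternionAlgebra.re_star, QuaternionAlgebra.imI_star,
          QuaternionAlgebra.imJ_star, QuaternionAlgebra.imK_star, QuaternionAlgebra.imK_zero]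
        ring
    have hunit := H Θ hΘne
    exact hstarne ((IsUnit.mul_right_eq_zero hunit).mp hmul)
  · -- d ≡ 1 mod 3 implies division
    intro hd3 x hx
    set φ := algebraMap ℚ K with hφ
    obtain ⟨a0, b0, h0⟩ := decompose d hdneg α hα hrank x.re
    obtain ⟨a1, b1, h1⟩ := decompose d hdneg α hα hrank x.imI
    obtain ⟨a2, b2, h2⟩ := decompose d hdneg α hα hrank x.imJ
    obtain ⟨a3, b3, h3⟩ := decompose d hdneg α hα hrank x.imK
    set NN : K := x.re^2 + x.imI^2 + 3*x.imJ^2 + 3*x.imK^2 with hNN_def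
    have hαd : α^2 = φ ((d:ℤ):ℚ) := by rw [hα, hφ, map_intCast]
    have hNN : NN ≠ 0 := by
      intro hNN0
      set E1 : ℚ := a0^2 + a1^2 + 3*a2^2 + 3*a3^2 + ((d:ℤ):ℚ)*(b0^2+b1^2+3*b2^2+3*b3^2) with hE1
      set E2 : ℚ := 2*(a0*b0 + a1*b1 + 3*a2*b2 + 3*a3*b3) with hE2
      have key : φ E1 + φ E2 * α = 0 := by
        rw [← hNN0, hNN_def, h0, h1, h2, h3, hE1, hE2]
        simp only [map_add, map_mul, map_pow, map_ofNat, map_one, map_sub, map_neg]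
        linear_combination (-((φ b0)^2 + (φ b1)^2 + 3*(φ b2)^2 + 3*(φ b3)^2)) * hαd
      obtain ⟨hE1z, hE2z⟩ := coords_unique d hdneg α hα E1 E2 key
      have hT : a0*b0 + a1*b1 + 3*a2*b2 + 3*a3*b3 = 0 := by
        rw [hE2] at hE2z; linarith
      -- integerize
      set k : ℕ := (a0.den * a1.den * a2.den * a3.den) * (b0.den * b1.den * b2.den * b3.den)
        with hk
      have hkpos : 0 < k := by positivity
      obtain ⟨A0, hA0⟩ := clear_den a0 k ⟨a1.den*a2.den*a3.den*(b0.den*b1.den*b2.den*b3.den), by rw [hk]; ring⟩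
      obtain ⟨A1, hA1⟩ := clear_den a1 k ⟨a0.den*a2.den*a3.den*(b0.den*b1.den*b2.den*b3.den), by rw [hk]; ring⟩
      obtain ⟨A2, hA2⟩ := clear_den a2 k ⟨a0.den*a1.den*a3.den*(b0.den*b1.den*b2.den*b3.den), by rw [hk]; ring⟩
      obtain ⟨A3, hA3⟩ := clear_den a3 k ⟨a0.den*a1.den*a2.den*(b0.den*b1.den*b2.den*b3.den), by rw [hk]; ring⟩
      obtain ⟨B0, hB0⟩ := clear_den b0 k ⟨a0.den*a1.den*a2.den*a3.den*(b1.den*b2.den*b3.den), by rw [hk]; ring⟩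
      obtain ⟨B1, hB1⟩ := clear_den b1 k ⟨a0.den*a1.den*a2.den*a3.den*(b0.den*b2.den*b3.den), by rw [hk]; ring⟩
      obtain ⟨B2, hB2⟩ := clear_den b2 k ⟨a0.den*a1.den*a2.den*a3.den*(b0.den*b1.den*b3.den), by rw [hk]; ring⟩
      obtain ⟨B3, hB3⟩ := clear_den b3 k ⟨a0.den*a1.den*a2.den*a3.den*(b0.den*b1.den*b2.den), by rw [hk]; ring⟩
      have hIntE1 : ((A0:ℚ))^2+(A1:ℚ)^2+3*(A2:ℚ)^2+3*(A3:ℚ)^2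
          + ((d:ℤ):ℚ)*((B0:ℚ)^2+(B1:ℚ)^2+3*(B2:ℚ)^2+3*(B3:ℚ)^2) = 0 := by
        rw [← hA0, ← hA1, ← hA2, ← hA3, ← hB0, ← hB1, ← hB2, ← hB3]
        have : E1 = 0 := hE1z
        rw [hE1] at this
        linear_combination ((k:ℚ))^2 * this
      have hIntE2 : (A0:ℚ)*(B0:ℚ)+(A1:ℚ)*(B1:ℚ)+3*(A2:ℚ)*(B2:ℚ)+3*(A3:ℚ)*(B3:ℚ) = 0 := by
        rw [← hA0, ← hA1, ← hA2, ← hA3, ← hB0, ← hB1, ← hB2, ← hB3]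
        linear_combination ((k:ℚ))^2 * hT
      have hZ1 : A0^2+A1^2+3*A2^2+3*A3^2 + d*(B0^2+B1^2+3*B2^2+3*B3^2) = 0 := by
        exact_mod_cast hIntE1
      have hZ2 : A0*B0+A1*B1+3*A2*B2+3*A3*B3 = 0 := by exact_mod_cast hIntE2
      obtain ⟨e0, e1, e2, e3, f0, f1, f2, f3⟩ := descent_final d hd3 A0 A1 A2 A3 B0 B1 B2 B3 hZ1 hZ2
      have hkQ : ((k:ℚ)) ≠ 0 := by positivity
      have ha0 : a0 = 0 := by
        have := hA0; rw [e0] at this; push_cast at this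
        exact (mul_eq_zero.mp this).resolve_left hkQ
      have ha1 : a1 = 0 := by
        have := hA1; rw [e1] at this; push_cast at this
        exact (mul_eq_zero.mp this).resolve_left hkQ
      have ha2 : a2 = 0 := by
        have := hA2; rw [e2] at this; push_cast at this
        exact (mul_eq_zero.mp this).resolve_left hkQ
      have ha3 : a3 = 0 := by
        have := hA3; rw [e3] at this; push_cast at this
        exact (mul_eq_zero.mp this).resolve_left hkQ
      have hb0 : b0 = 0 := by
        have := hB0; rw [f0] at this; push_cast at this
        exact (mul_eq_zero.mp this).resolve_left hkQ
      have hb1 : b1 = 0 := by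
        have := hB1; rw [f1] at this; push_cast at this
        exact (mul_eq_zero.mp this).resolve_left hkQ
      have hb2 : b2 = 0 := by
        have := hB2; rw [f2] at this; push_cast at this
        exact (mul_eq_zero.mp this).resolve_left hkQ
      have hb3 : b3 = 0 := by
        have := hB3; rw [f3] at this; push_cast at this
        exact (mul_eq_zero.mp this).resolve_left hkQ
      apply hx
      ext
      · rw [h0, ha0, hb0]; simp
      · rw [h1, ha1, hb1]; simp
      · rw [h2, ha2, hb2]; simp
      · rw [h3, ha3, hb3]; simp
    -- construct the inverse
    have hxs : x * star x = ((NN : K) : ℍ[K,-1,-3]) := by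
      ext
      · rw [QuaternionAlgebra.re_mul]
        simp only [QuaternionAlgebra.re_star, QuaternionAlgebra.imI_star,
          QuaternionAlgebra.imJ_star, QuaternionAlgebra.imK_star, QuaternionAlgebra.re_coe, hNN_def]
        ring
      · rw [QuaternionAlgebra.imI_mul]
        simp only [QuaternionAlgebra.re_star, QuaternionAlgebra.imI_star,
          QuaternionAlgebra.imJ_star, QuaternionAlgebra.imK_star, QuaternionAlgebra.imI_coe]
        ring
      · rw [QuaternionAlgebra.imJ_mul]
        simp only [QuaternionAlgebra.re_star, QuaternionAlgebra.imI_star,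
          QuaternionAlgebra.imJ_star, QuaternionAlgebra.imK_star, QuaternionAlgebra.imJ_coe]
        ring
      · rw [QuaternionAlgebra.imK_mul]
        simp only [QuaternionAlgebra.re_star, QuaternionAlgebra.imI_star,
          QuaternionAlgebra.imJ_star, QuaternionAlgebra.imK_star, QuaternionAlgebra.imK_coe]
        ring
    have hsx : star x * x = ((NN : K) : ℍ[K,-1,-3]) := by
      ext
      · rw [QuaternionAlgebra.re_mul]
        simp only [QuaternionAlgebra.re_star, QuaternionAlgebra.imI_star,
          QuaternionAlgebra.imJ_star, QuaternionAlgebra.imK_star, QuaternionAlgebra.re_coe, hNN_def]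
        ring
      · rw [QuaternionAlgebra.imI_mul]
        simp only [QuaternionAlgebra.re_star, QuaternionAlgebra.imI_star,
          QuaternionAlgebra.imJ_star, QuaternionAlgebra.imK_star, QuaternionAlgebra.imI_coe]
        ring
      · rw [QuaternionAlgebra.imJ_mul]
        simp only [QuaternionAlgebra.re_star, QuaternionAlgebra.imI_star,
          QuaternionAlgebra.imJ_star, QuaternionAlgebra.imK_star, QuaternionAlgebra.imJ_coe]
        ring
      · rw [QuaternionAlgebra.imK_mul]
        simp only [QuaternionAlgebra.re_star, QuaternionAlgebra.imI_star,
          QuaternionAlgebra.imJ_star, QuaternionAlgebra.imK_star, QuaternionAlgebra.imK_coe]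
        ring
    refine isUnit_iff_exists.mpr ⟨(NN⁻¹ : K) • star x, ?_, ?_⟩
    · calc x * ((NN⁻¹ : K) • star x) = (NN⁻¹ : K) • (x * star x) := mul_smul_comm _ _ _
        _ = (NN⁻¹ : K) • ((NN : K) : ℍ[K,-1,-3]) := by rw [hxs]
        _ = 1 := by rw [QuaternionAlgebra.smul_coe, inv_mul_cancel₀ hNN, QuaternionAlgebra.coe_one]
    · calc ((NN⁻¹ : K) • star x) * x = (NN⁻¹ : K) • (star x * x) := smul_mul_assoc _ _ _
        _ = (NN⁻¹ : K) • ((NN : K) : ℍ[K,-1,-3]) := by rw [hsx]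
        _ = 1 := by rw [QuaternionAlgebra.smul_coe, inv_mul_cancel₀ hNN, QuaternionAlgebra.coe_one]
end

section
/- Let D₁₆⁻ be the semidihedral group of order 16 with presentation ⟨a, b | a⁸ = b² = 1, b a b⁻¹ = a³⟩ (equivalently, the semidirect product ℤ/8 ⋊ ℤ/2 where the generator of ℤ/2 acts on ℤ/8 by multiplication by 3). Then the rational group algebra ℚ[D₁₆⁻] is isomorphic as a ℚ-algebra to ℚ × ℚ × ℚ × ℚ × M₂(ℚ) × M₂(ℚ(√−2)). -/
set_option maxHeartbeats 1600000

namespace SD16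

def H : Type := ZMod 8 × ZMod 2
def hmk (i : ZMod 8) (j : ZMod 2) : H := (i, j)
def h1 : H → ZMod 8 := Prod.fst
def h2 : H → ZMod 2 := Prod.snd

instance : Fintype H := inferInstanceAs (Fintype (ZMod 8 × ZMod 2))
instance : DecidableEq H := inferInstanceAs (DecidableEq (ZMod 8 × ZMod 2))

instance : Group H where
  mul g h := hmk (h1 g + 3 ^ (h2 g).val * h1 h) (h2 g + h2 h)
  one := hmk 0 0
  inv g := hmk (-(3 ^ (h2 g).val) * h1 g) (h2 g)
  mul_assoc := by decide
  one_mul := by decide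
  mul_one := by decide
  inv_mul_cancel := by decide

lemma h1_mul (g h : H) : h1 (g * h) = h1 g + 3 ^ (h2 g).val * h1 h := rfl
lemma h2_mul (g h : H) : h2 (g * h) = h2 g + h2 h := rfl
lemma h1_one : h1 1 = 0 := rfl
lemma h2_one : h2 1 = 0 := rfl
lemma cardH : Fintype.card H = 16 := by decide

section sd
variable {M : Type*} [Monoid M] (x y : M)

lemma comm1 (hxy : y * x = x ^ 3 * y) (k : ℕ) : y * x ^ k = x ^ (3 * k) * y := by
  induction k with
  | zero => simp
  | succ n ih =>
      rw [pow_succ, ← mul_assoc, ih, mul_assoc, hxy, ← mul_assoc, ← pow_add,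
        show 3 * n + 3 = 3 * (n + 1) by ring]

lemma comm2 (hxy : y * x = x ^ 3 * y) (j k : ℕ) :
    y ^ j * x ^ k = x ^ (3 ^ j * k) * y ^ j := by
  induction j generalizing k with
  | zero => simp
  | succ n ih =>
      rw [pow_succ, mul_assoc, comm1 x y hxy, ← mul_assoc, ih, mul_assoc, ← pow_succ,
        show 3 ^ n * (3 * k) = 3 ^ (n + 1) * k by ring]

def sdHom (hx : x ^ 8 = 1) (hy : y ^ 2 = 1) (hxy : y * x = x ^ 3 * y) : H →* M where
  toFun g := x ^ (h1 g).val * y ^ (h2 g).val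
  map_one' := by
    show x ^ (h1 1).val * y ^ (h2 1).val = 1
    rw [h1_one, h2_one]
    simp
  map_mul' g h := by
    show x ^ (h1 (g * h)).val * y ^ (h2 (g * h)).val
      = (x ^ (h1 g).val * y ^ (h2 g).val) * (x ^ (h1 h).val * y ^ (h2 h).val)
    rw [h1_mul, h2_mul]
    have e8 : h1 g + 3 ^ (h2 g).val * h1 h
        = (((h1 g).val + 3 ^ (h2 g).val * (h1 h).val : ℕ) : ZMod 8) := by
      push_cast [ZMod.natCast_val, ZMod.cast_id]
      rfl
    have e2 : h2 g + h2 h = (((h2 g).val + (h2 h).val : ℕ) : ZMod 2) := by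
      push_cast [ZMod.natCast_val, ZMod.cast_id]
      rfl
    rw [e8, e2, ZMod.val_natCast, ZMod.val_natCast, ← pow_eq_pow_mod _ hx,
      ← pow_eq_pow_mod _ hy, pow_add, pow_add, mul_assoc (x ^ (h1 g).val),
      ← mul_assoc (x ^ (3 ^ (h2 g).val * (h1 h).val)), ← comm2 x y hxy,
      ← mul_assoc, ← mul_assoc, mul_assoc (x ^ (h1 g).val * y ^ (h2 g).val)]

lemma sdHom_apply (hx : x ^ 8 = 1) (hy : y ^ 2 = 1) (hxy : y * x = x ^ 3 * y) (g : H) :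
    sdHom x y hx hy hxy g = x ^ (h1 g).val * y ^ (h2 g).val := rfl

end sd

abbrev A2 (K : Type) [Field K] : Type :=
  ℚ × ℚ × ℚ × ℚ × Matrix (Fin 2) (Fin 2) ℚ × Matrix (Fin 2) (Fin 2) K

lemma prodPow {M N : Type*} [Monoid M] [Monoid N] (p : M) (q : N) (n : ℕ) :
    (p, q) ^ n = (p ^ n, q ^ n) := by
  ext
  · exact Prod.pow_fst _ _
  · exact Prod.pow_snd _ _

lemma K_rep (K : Type) [Field K] [Algebra ℚ K] (hK : Module.finrank ℚ K = 2)
    (β : K) (hβ : β ^ 2 = -2) (z : K) :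
    ∃ u v : ℚ, z = (u : K) + (v : K) * β := by
  haveI : Module.Finite ℚ K := Module.finite_of_finrank_eq_succ (n := 1) hK
  haveI : CharZero K := charZero_of_injective_algebraMap (algebraMap ℚ K).injective
  have hli : LinearIndependent ℚ ![(1 : K), β] := by
    refine (LinearIndependent.pair_iff' one_ne_zero).2 ?_
    intro q hq
    rw [Algebra.smul_def, mul_one] at hq
    simp only [eq_ratCast] at hq
    have h2 : q ^ 2 = -2 := by
      apply Rat.cast_injective (α := K)
      push_cast
      rw [hq]
      exact hβ
    nlinarith [sq_nonneg q]
  have hsp : Submodule.span ℚ (Set.range ![(1 : K), β]) = ⊤ := by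
    apply Submodule.eq_top_of_finrank_eq
    rw [finrank_span_eq_card hli, Fintype.card_fin, hK]
  have hz : z ∈ Submodule.span ℚ (Set.range ![(1 : K), β]) := hsp ▸ Submodule.mem_top
  obtain ⟨c, hc⟩ := (Submodule.mem_span_range_iff_exists_fun ℚ).1 hz
  refine ⟨c 0, c 1, ?_⟩
  rw [← hc]
  simp [Fin.sum_univ_two, Algebra.smul_def]

-- rational matrix lemmas
lemma m5p0 : (!![0, -1; 1, 0] : Matrix (Fin 2) (Fin 2) ℚ) ^ 0 = !![1, 0; 0, 1] := by
  rw [pow_zero, Matrix.one_fin_two]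

lemma m5p1 : (!![0, -1; 1, 0] : Matrix (Fin 2) (Fin 2) ℚ) ^ 1 = !![0, -1; 1, 0] := by
  rw [pow_one]

lemma m5p2 : (!![0, -1; 1, 0] : Matrix (Fin 2) (Fin 2) ℚ) ^ 2 = !![(-1), 0; 0, (-1)] := by
  rw [pow_succ, m5p1]
  ext i j
  fin_cases i <;> fin_cases j <;> norm_num [Matrix.mul_apply, Fin.sum_univ_two]

lemma m5p3 : (!![0, -1; 1, 0] : Matrix (Fin 2) (Fin 2) ℚ) ^ 3 = !![0, 1; (-1), 0] := by
  rw [pow_succ, m5p2]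
  ext i j
  fin_cases i <;> fin_cases j <;> norm_num [Matrix.mul_apply, Fin.sum_univ_two]

lemma m5p4 : (!![0, -1; 1, 0] : Matrix (Fin 2) (Fin 2) ℚ) ^ 4 = !![1, 0; 0, 1] := by
  rw [pow_succ, m5p3]
  ext i j
  fin_cases i <;> fin_cases j <;> norm_num [Matrix.mul_apply, Fin.sum_univ_two]

lemma m5p5 : (!![0, -1; 1, 0] : Matrix (Fin 2) (Fin 2) ℚ) ^ 5 = !![0, (-1); 1, 0] := by
  rw [pow_succ, m5p4]
  ext i j
  fin_cases i <;> fin_cases j <;> norm_num [Matrix.mul_apply, Fin.sum_univ_two]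

lemma m5p6 : (!![0, -1; 1, 0] : Matrix (Fin 2) (Fin 2) ℚ) ^ 6 = !![(-1), 0; 0, (-1)] := by
  rw [pow_succ, m5p5]
  ext i j
  fin_cases i <;> fin_cases j <;> norm_num [Matrix.mul_apply, Fin.sum_univ_two]

lemma m5p7 : (!![0, -1; 1, 0] : Matrix (Fin 2) (Fin 2) ℚ) ^ 7 = !![0, 1; (-1), 0] := by
  rw [pow_succ, m5p6]
  ext i j
  fin_cases i <;> fin_cases j <;> norm_num [Matrix.mul_apply, Fin.sum_univ_two]

lemma m5p8 : (!![0, -1; 1, 0] : Matrix (Fin 2) (Fin 2) ℚ) ^ 8 = !![1, 0; 0, 1] := by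
  rw [pow_succ, m5p7]
  ext i j
  fin_cases i <;> fin_cases j <;> norm_num [Matrix.mul_apply, Fin.sum_univ_two]

lemma m5n0 : (!![1, 0; 0, 1] : Matrix (Fin 2) (Fin 2) ℚ) * !![1, 0; 0, -1] = !![1, 0; 0, (-1)] := by
  ext i j
  fin_cases i <;> fin_cases j <;> norm_num [Matrix.mul_apply, Fin.sum_univ_two]

lemma m5n1 : (!![0, (-1); 1, 0] : Matrix (Fin 2) (Fin 2) ℚ) * !![1, 0; 0, -1] = !![0, 1; 1, 0] := by
  ext i j
  fin_cases i <;> fin_cases j <;> norm_num [Matrix.mul_apply, Fin.sum_univ_two]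

lemma m5n2 : (!![(-1), 0; 0, (-1)] : Matrix (Fin 2) (Fin 2) ℚ) * !![1, 0; 0, -1] = !![(-1), 0; 0, 1] := by
  ext i j
  fin_cases i <;> fin_cases j <;> norm_num [Matrix.mul_apply, Fin.sum_univ_two]

lemma m5n3 : (!![0, 1; (-1), 0] : Matrix (Fin 2) (Fin 2) ℚ) * !![1, 0; 0, -1] = !![0, (-1); (-1), 0] := by
  ext i j
  fin_cases i <;> fin_cases j <;> norm_num [Matrix.mul_apply, Fin.sum_univ_two]

lemma m5n4 : (!![1, 0; 0, 1] : Matrix (Fin 2) (Fin 2) ℚ) * !![1, 0; 0, -1] = !![1, 0; 0, (-1)] := by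
  ext i j
  fin_cases i <;> fin_cases j <;> norm_num [Matrix.mul_apply, Fin.sum_univ_two]

lemma m5n5 : (!![0, (-1); 1, 0] : Matrix (Fin 2) (Fin 2) ℚ) * !![1, 0; 0, -1] = !![0, 1; 1, 0] := by
  ext i j
  fin_cases i <;> fin_cases j <;> norm_num [Matrix.mul_apply, Fin.sum_univ_two]

lemma m5n6 : (!![(-1), 0; 0, (-1)] : Matrix (Fin 2) (Fin 2) ℚ) * !![1, 0; 0, -1] = !![(-1), 0; 0, 1] := by
  ext i j
  fin_cases i <;> fin_cases j <;> norm_num [Matrix.mul_apply, Fin.sum_univ_two]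

lemma m5n7 : (!![0, 1; (-1), 0] : Matrix (Fin 2) (Fin 2) ℚ) * !![1, 0; 0, -1] = !![0, (-1); (-1), 0] := by
  ext i j
  fin_cases i <;> fin_cases j <;> norm_num [Matrix.mul_apply, Fin.sum_univ_two]

lemma n5sq : (!![1, 0; 0, -1] : Matrix (Fin 2) (Fin 2) ℚ) ^ 2 = !![1, 0; 0, 1] := by
  rw [pow_two]
  ext i j
  fin_cases i <;> fin_cases j <;> norm_num [Matrix.mul_apply, Fin.sum_univ_two]

lemma n5m5 : (!![1, 0; 0, -1] : Matrix (Fin 2) (Fin 2) ℚ) * !![0, -1; 1, 0] = !![0, (-1); (-1), 0] := by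
  ext i j
  fin_cases i <;> fin_cases j <;> norm_num [Matrix.mul_apply, Fin.sum_univ_two]

variable (K : Type) [Field K] [Algebra ℚ K] (β : K)

lemma m6p0 (hβ : β ^ 2 = -2) : (!![0, 1; 1, β] : Matrix (Fin 2) (Fin 2) K) ^ 0 = !![1, 0; 0, 1] := by
  rw [pow_zero, Matrix.one_fin_two]

lemma m6p1 (hβ : β ^ 2 = -2) : (!![0, 1; 1, β] : Matrix (Fin 2) (Fin 2) K) ^ 1 = !![0, 1; 1, β] := by
  rw [pow_one]

lemma m6p2 (hβ : β ^ 2 = -2) : (!![0, 1; 1, β] : Matrix (Fin 2) (Fin 2) K) ^ 2 = (!![1, β; β, (-1)] : Matrix (Fin 2) (Fin 2) K) := by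
  rw [pow_succ, m6p1 K β hβ]
  ext i j
  fin_cases i <;> fin_cases j <;>
    simp [Matrix.mul_apply, Fin.sum_univ_two] <;>
    first
      | rfl
      | ring1
      | linear_combination hβ
      | linear_combination -hβ
      | linear_combination 2 * hβ
      | linear_combination -2 * hβ
      | linear_combination β * hβ
      | linear_combination -β * hβ

lemma m6p3 (hβ : β ^ 2 = -2) : (!![0, 1; 1, β] : Matrix (Fin 2) (Fin 2) K) ^ 3 = (!![β, (-1); (-1), 0] : Matrix (Fin 2) (Fin 2) K) := by
  rw [pow_succ, m6p2 K β hβ]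
  ext i j
  fin_cases i <;> fin_cases j <;>
    simp [Matrix.mul_apply, Fin.sum_univ_two] <;>
    first
      | rfl
      | ring1
      | linear_combination hβ
      | linear_combination -hβ
      | linear_combination 2 * hβ
      | linear_combination -2 * hβ
      | linear_combination β * hβ
      | linear_combination -β * hβ

lemma m6p4 (hβ : β ^ 2 = -2) : (!![0, 1; 1, β] : Matrix (Fin 2) (Fin 2) K) ^ 4 = (!![(-1), 0; 0, (-1)] : Matrix (Fin 2) (Fin 2) K) := by
  rw [pow_succ, m6p3 K β hβ]
  ext i j
  fin_cases i <;> fin_cases j <;>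
    simp [Matrix.mul_apply, Fin.sum_univ_two] <;>
    first
      | rfl
      | ring1
      | linear_combination hβ
      | linear_combination -hβ
      | linear_combination 2 * hβ
      | linear_combination -2 * hβ
      | linear_combination β * hβ
      | linear_combination -β * hβ

lemma m6p5 (hβ : β ^ 2 = -2) : (!![0, 1; 1, β] : Matrix (Fin 2) (Fin 2) K) ^ 5 = (!![0, (-1); (-1), -β] : Matrix (Fin 2) (Fin 2) K) := by
  rw [pow_succ, m6p4 K β hβ]
  ext i j
  fin_cases i <;> fin_cases j <;>
    simp [Matrix.mul_apply, Fin.sum_univ_two] <;>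
    first
      | rfl
      | ring1
      | linear_combination hβ
      | linear_combination -hβ
      | linear_combination 2 * hβ
      | linear_combination -2 * hβ
      | linear_combination β * hβ
      | linear_combination -β * hβ

lemma m6p6 (hβ : β ^ 2 = -2) : (!![0, 1; 1, β] : Matrix (Fin 2) (Fin 2) K) ^ 6 = (!![(-1), -β; -β, 1] : Matrix (Fin 2) (Fin 2) K) := by
  rw [pow_succ, m6p5 K β hβ]
  ext i j
  fin_cases i <;> fin_cases j <;>
    simp [Matrix.mul_apply, Fin.sum_univ_two] <;>
    first
      | rfl
      | ring1
      | linear_combination hβ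
      | linear_combination -hβ
      | linear_combination 2 * hβ
      | linear_combination -2 * hβ
      | linear_combination β * hβ
      | linear_combination -β * hβ

lemma m6p7 (hβ : β ^ 2 = -2) : (!![0, 1; 1, β] : Matrix (Fin 2) (Fin 2) K) ^ 7 = (!![-β, 1; 1, 0] : Matrix (Fin 2) (Fin 2) K) := by
  rw [pow_succ, m6p6 K β hβ]
  ext i j
  fin_cases i <;> fin_cases j <;>
    simp [Matrix.mul_apply, Fin.sum_univ_two] <;>
    first
      | rfl
      | ring1
      | linear_combination hβ
      | linear_combination -hβ
      | linear_combination 2 * hβ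
      | linear_combination -2 * hβ
      | linear_combination β * hβ
      | linear_combination -β * hβ

lemma m6p8 (hβ : β ^ 2 = -2) : (!![0, 1; 1, β] : Matrix (Fin 2) (Fin 2) K) ^ 8 = (!![1, 0; 0, 1] : Matrix (Fin 2) (Fin 2) K) := by
  rw [pow_succ, m6p7 K β hβ]
  ext i j
  fin_cases i <;> fin_cases j <;>
    simp [Matrix.mul_apply, Fin.sum_univ_two] <;>
    first
      | rfl
      | ring1
      | linear_combination hβ
      | linear_combination -hβ
      | linear_combination 2 * hβ
      | linear_combination -2 * hβ
      | linear_combination β * hβ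
      | linear_combination -β * hβ

lemma m6n0 (hβ : β ^ 2 = -2) : ((!![1, 0; 0, 1] : Matrix (Fin 2) (Fin 2) K)) * !![1, 0; β, -1] = (!![1, 0; β, (-1)] : Matrix (Fin 2) (Fin 2) K) := by
  ext i j
  fin_cases i <;> fin_cases j <;>
    simp [Matrix.mul_apply, Fin.sum_univ_two] <;>
    first
      | rfl
      | ring1
      | linear_combination hβ
      | linear_combination -hβ
      | linear_combination 2 * hβ
      | linear_combination -2 * hβ
      | linear_combination β * hβ
      | linear_combination -β * hβ

lemma m6n1 (hβ : β ^ 2 = -2) : ((!![0, 1; 1, β] : Matrix (Fin 2) (Fin 2) K)) * !![1, 0; β, -1] = (!![β, (-1); (-1), -β] : Matrix (Fin 2) (Fin 2) K) := by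
  ext i j
  fin_cases i <;> fin_cases j <;>
    simp [Matrix.mul_apply, Fin.sum_univ_two] <;>
    first
      | rfl
      | ring1
      | linear_combination hβ
      | linear_combination -hβ
      | linear_combination 2 * hβ
      | linear_combination -2 * hβ
      | linear_combination β * hβ
      | linear_combination -β * hβ

lemma m6n2 (hβ : β ^ 2 = -2) : ((!![1, β; β, (-1)] : Matrix (Fin 2) (Fin 2) K)) * !![1, 0; β, -1] = (!![(-1), -β; 0, 1] : Matrix (Fin 2) (Fin 2) K) := by
  ext i j
  fin_cases i <;> fin_cases j <;>
    simp [Matrix.mul_apply, Fin.sum_univ_two] <;>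
    first
      | rfl
      | ring1
      | linear_combination hβ
      | linear_combination -hβ
      | linear_combination 2 * hβ
      | linear_combination -2 * hβ
      | linear_combination β * hβ
      | linear_combination -β * hβ

lemma m6n3 (hβ : β ^ 2 = -2) : ((!![β, (-1); (-1), 0] : Matrix (Fin 2) (Fin 2) K)) * !![1, 0; β, -1] = (!![0, 1; (-1), 0] : Matrix (Fin 2) (Fin 2) K) := by
  ext i j
  fin_cases i <;> fin_cases j <;>
    simp [Matrix.mul_apply, Fin.sum_univ_two] <;>
    first
      | rfl
      | ring1
      | linear_combination hβ
      | linear_combination -hβ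
      | linear_combination 2 * hβ
      | linear_combination -2 * hβ
      | linear_combination β * hβ
      | linear_combination -β * hβ

lemma m6n4 (hβ : β ^ 2 = -2) : ((!![(-1), 0; 0, (-1)] : Matrix (Fin 2) (Fin 2) K)) * !![1, 0; β, -1] = (!![(-1), 0; -β, 1] : Matrix (Fin 2) (Fin 2) K) := by
  ext i j
  fin_cases i <;> fin_cases j <;>
    simp [Matrix.mul_apply, Fin.sum_univ_two] <;>
    first
      | rfl
      | ring1
      | linear_combination hβ
      | linear_combination -hβ
      | linear_combination 2 * hβ
      | linear_combination -2 * hβ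
      | linear_combination β * hβ
      | linear_combination -β * hβ

lemma m6n5 (hβ : β ^ 2 = -2) : ((!![0, (-1); (-1), -β] : Matrix (Fin 2) (Fin 2) K)) * !![1, 0; β, -1] = (!![-β, 1; 1, β] : Matrix (Fin 2) (Fin 2) K) := by
  ext i j
  fin_cases i <;> fin_cases j <;>
    simp [Matrix.mul_apply, Fin.sum_univ_two] <;>
    first
      | rfl
      | ring1
      | linear_combination hβ
      | linear_combination -hβ
      | linear_combination 2 * hβ
      | linear_combination -2 * hβ
      | linear_combination β * hβ
      | linear_combination -β * hβ

lemma m6n6 (hβ : β ^ 2 = -2) : ((!![(-1), -β; -β, 1] : Matrix (Fin 2) (Fin 2) K)) * !![1, 0; β, -1] = (!![1, β; 0, (-1)] : Matrix (Fin 2) (Fin 2) K) := by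
  ext i j
  fin_cases i <;> fin_cases j <;>
    simp [Matrix.mul_apply, Fin.sum_univ_two] <;>
    first
      | rfl
      | ring1
      | linear_combination hβ
      | linear_combination -hβ
      | linear_combination 2 * hβ
      | linear_combination -2 * hβ
      | linear_combination β * hβ
      | linear_combination -β * hβ

lemma m6n7 (hβ : β ^ 2 = -2) : ((!![-β, 1; 1, 0] : Matrix (Fin 2) (Fin 2) K)) * !![1, 0; β, -1] = (!![0, (-1); 1, 0] : Matrix (Fin 2) (Fin 2) K) := by
  ext i j
  fin_cases i <;> fin_cases j <;>
    simp [Matrix.mul_apply, Fin.sum_univ_two] <;>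
    first
      | rfl
      | ring1
      | linear_combination hβ
      | linear_combination -hβ
      | linear_combination 2 * hβ
      | linear_combination -2 * hβ
      | linear_combination β * hβ
      | linear_combination -β * hβ

lemma n6sq : (!![1, 0; β, -1] : Matrix (Fin 2) (Fin 2) K) ^ 2 = !![1, 0; 0, 1] := by
  rw [pow_two]
  ext i j
  fin_cases i <;> fin_cases j <;>
    simp [Matrix.mul_apply, Fin.sum_univ_two] <;> ring1

lemma n6m6 : (!![1, 0; β, -1] : Matrix (Fin 2) (Fin 2) K) * !![0, 1; 1, β] = (!![0, 1; (-1), 0] : Matrix (Fin 2) (Fin 2) K) := by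
  ext i j
  fin_cases i <;> fin_cases j <;>
    simp [Matrix.mul_apply, Fin.sum_univ_two] <;> ring1

def X : A2 K := (1, 1, -1, -1, !![0, -1; 1, 0], !![0, 1; 1, β])
def Y : A2 K := (1, -1, 1, -1, !![1, 0; 0, -1], !![1, 0; β, -1])

lemma hX (hβ : β ^ 2 = -2) : X K β ^ 8 = 1 := by
  have h5 : (!![0, -1; 1, 0] : Matrix (Fin 2) (Fin 2) ℚ) ^ 8 = 1 := by
    rw [m5p8]; exact Matrix.one_fin_two.symm
  have h6 : (!![0, 1; 1, β] : Matrix (Fin 2) (Fin 2) K) ^ 8 = 1 := by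
    rw [m6p8 K β hβ]; exact Matrix.one_fin_two.symm
  simp only [X, prodPow, h5, h6]
  norm_num

lemma hY : Y K β ^ 2 = 1 := by
  have h5 : (!![1, 0; 0, -1] : Matrix (Fin 2) (Fin 2) ℚ) ^ 2 = 1 := by
    rw [n5sq]; exact Matrix.one_fin_two.symm
  have h6 : (!![1, 0; β, -1] : Matrix (Fin 2) (Fin 2) K) ^ 2 = 1 := by
    rw [n6sq K β]; exact Matrix.one_fin_two.symm
  simp only [Y, prodPow, h5, h6]
  norm_num

lemma hXY (hβ : β ^ 2 = -2) : Y K β * X K β = X K β ^ 3 * Y K β := by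
  simp only [X, Y, prodPow, Prod.mk_mul_mk, m5p3, m6p3 K β hβ, n5m5, n6m6 K β,
    m5n3, m6n3 K β hβ]
  try norm_num

def rho (hβ : β ^ 2 = -2) : H →* A2 K :=
  sdHom (X K β) (Y K β) (hX K β hβ) (hY K β) (hXY K β hβ)

lemma rho_apply (hβ : β ^ 2 = -2) (g : H) :
    rho K β hβ g = X K β ^ (h1 g).val * Y K β ^ (h2 g).val := rfl

lemma ev00 (hβ : β ^ 2 = -2) : rho K β hβ (hmk 0 0) = ((1 : ℚ), (1 : ℚ), (1 : ℚ), (1 : ℚ), (1 : Matrix (Fin 2) (Fin 2) ℚ), (1 : Matrix (Fin 2) (Fin 2) K)) := by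
  rw [show hmk 0 0 = (1 : H) from rfl, map_one]
  rfl

lemma ev01 (hβ : β ^ 2 = -2) : rho K β hβ (hmk 0 1) = ((1 : ℚ), ((-1) : ℚ), (1 : ℚ), ((-1) : ℚ), (!![1, 0; 0, (-1)] : Matrix (Fin 2) (Fin 2) ℚ), (!![1, 0; β, (-1)] : Matrix (Fin 2) (Fin 2) K)) := by
  rw [rho_apply, show h1 (hmk 0 1) = 0 from rfl, show h2 (hmk 0 1) = 1 from rfl,
    show ((0 : ZMod 8)).val = 0 from rfl, show ((1 : ZMod 2)).val = 1 from rfl]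
  simp only [X, Y, prodPow, Prod.mk_mul_mk, pow_zero, pow_one, one_pow, mul_one, one_mul, m5p0, m6p0 K β hβ]
  try norm_num

lemma ev10 (hβ : β ^ 2 = -2) : rho K β hβ (hmk 1 0) = ((1 : ℚ), (1 : ℚ), ((-1) : ℚ), ((-1) : ℚ), (!![0, (-1); 1, 0] : Matrix (Fin 2) (Fin 2) ℚ), (!![0, 1; 1, β] : Matrix (Fin 2) (Fin 2) K)) := by
  rw [rho_apply, show h1 (hmk 1 0) = 1 from rfl, show h2 (hmk 1 0) = 0 from rfl,
    show ((1 : ZMod 8)).val = 1 from rfl, show ((0 : ZMod 2)).val = 0 from rfl]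
  simp only [X, Y, prodPow, Prod.mk_mul_mk, pow_zero, pow_one, one_pow, mul_one, one_mul, m5p1, m6p1 K β hβ]
  try norm_num

lemma ev11 (hβ : β ^ 2 = -2) : rho K β hβ (hmk 1 1) = ((1 : ℚ), ((-1) : ℚ), ((-1) : ℚ), (1 : ℚ), (!![0, 1; 1, 0] : Matrix (Fin 2) (Fin 2) ℚ), (!![β, (-1); (-1), -β] : Matrix (Fin 2) (Fin 2) K)) := by
  rw [rho_apply, show h1 (hmk 1 1) = 1 from rfl, show h2 (hmk 1 1) = 1 from rfl,
    show ((1 : ZMod 8)).val = 1 from rfl, show ((1 : ZMod 2)).val = 1 from rfl]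
  simp only [X, Y, prodPow, Prod.mk_mul_mk, pow_zero, pow_one, one_pow, mul_one, one_mul, m5p1, m6p1 K β hβ, m5n1, m6n1 K β hβ]
  try norm_num

lemma ev20 (hβ : β ^ 2 = -2) : rho K β hβ (hmk 2 0) = ((1 : ℚ), (1 : ℚ), (1 : ℚ), (1 : ℚ), (!![(-1), 0; 0, (-1)] : Matrix (Fin 2) (Fin 2) ℚ), (!![1, β; β, (-1)] : Matrix (Fin 2) (Fin 2) K)) := by
  rw [rho_apply, show h1 (hmk 2 0) = 2 from rfl, show h2 (hmk 2 0) = 0 from rfl,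
    show ((2 : ZMod 8)).val = 2 from rfl, show ((0 : ZMod 2)).val = 0 from rfl]
  simp only [X, Y, prodPow, Prod.mk_mul_mk, pow_zero, pow_one, one_pow, mul_one, one_mul, m5p2, m6p2 K β hβ]
  try norm_num

lemma ev21 (hβ : β ^ 2 = -2) : rho K β hβ (hmk 2 1) = ((1 : ℚ), ((-1) : ℚ), (1 : ℚ), ((-1) : ℚ), (!![(-1), 0; 0, 1] : Matrix (Fin 2) (Fin 2) ℚ), (!![(-1), -β; 0, 1] : Matrix (Fin 2) (Fin 2) K)) := by
  rw [rho_apply, show h1 (hmk 2 1) = 2 from rfl, show h2 (hmk 2 1) = 1 from rfl,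
    show ((2 : ZMod 8)).val = 2 from rfl, show ((1 : ZMod 2)).val = 1 from rfl]
  simp only [X, Y, prodPow, Prod.mk_mul_mk, pow_zero, pow_one, one_pow, mul_one, one_mul, m5p2, m6p2 K β hβ, m5n2, m6n2 K β hβ]
  try norm_num

lemma ev30 (hβ : β ^ 2 = -2) : rho K β hβ (hmk 3 0) = ((1 : ℚ), (1 : ℚ), ((-1) : ℚ), ((-1) : ℚ), (!![0, 1; (-1), 0] : Matrix (Fin 2) (Fin 2) ℚ), (!![β, (-1); (-1), 0] : Matrix (Fin 2) (Fin 2) K)) := by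
  rw [rho_apply, show h1 (hmk 3 0) = 3 from rfl, show h2 (hmk 3 0) = 0 from rfl,
    show ((3 : ZMod 8)).val = 3 from rfl, show ((0 : ZMod 2)).val = 0 from rfl]
  simp only [X, Y, prodPow, Prod.mk_mul_mk, pow_zero, pow_one, one_pow, mul_one, one_mul, m5p3, m6p3 K β hβ]
  try norm_num

lemma ev31 (hβ : β ^ 2 = -2) : rho K β hβ (hmk 3 1) = ((1 : ℚ), ((-1) : ℚ), ((-1) : ℚ), (1 : ℚ), (!![0, (-1); (-1), 0] : Matrix (Fin 2) (Fin 2) ℚ), (!![0, 1; (-1), 0] : Matrix (Fin 2) (Fin 2) K)) := by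
  rw [rho_apply, show h1 (hmk 3 1) = 3 from rfl, show h2 (hmk 3 1) = 1 from rfl,
    show ((3 : ZMod 8)).val = 3 from rfl, show ((1 : ZMod 2)).val = 1 from rfl]
  simp only [X, Y, prodPow, Prod.mk_mul_mk, pow_zero, pow_one, one_pow, mul_one, one_mul, m5p3, m6p3 K β hβ, m5n3, m6n3 K β hβ]
  try norm_num

lemma ev40 (hβ : β ^ 2 = -2) : rho K β hβ (hmk 4 0) = ((1 : ℚ), (1 : ℚ), (1 : ℚ), (1 : ℚ), (!![1, 0; 0, 1] : Matrix (Fin 2) (Fin 2) ℚ), (!![(-1), 0; 0, (-1)] : Matrix (Fin 2) (Fin 2) K)) := by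
  rw [rho_apply, show h1 (hmk 4 0) = 4 from rfl, show h2 (hmk 4 0) = 0 from rfl,
    show ((4 : ZMod 8)).val = 4 from rfl, show ((0 : ZMod 2)).val = 0 from rfl]
  simp only [X, Y, prodPow, Prod.mk_mul_mk, pow_zero, pow_one, one_pow, mul_one, one_mul, m5p4, m6p4 K β hβ]
  try norm_num

lemma ev41 (hβ : β ^ 2 = -2) : rho K β hβ (hmk 4 1) = ((1 : ℚ), ((-1) : ℚ), (1 : ℚ), ((-1) : ℚ), (!![1, 0; 0, (-1)] : Matrix (Fin 2) (Fin 2) ℚ), (!![(-1), 0; -β, 1] : Matrix (Fin 2) (Fin 2) K)) := by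
  rw [rho_apply, show h1 (hmk 4 1) = 4 from rfl, show h2 (hmk 4 1) = 1 from rfl,
    show ((4 : ZMod 8)).val = 4 from rfl, show ((1 : ZMod 2)).val = 1 from rfl]
  simp only [X, Y, prodPow, Prod.mk_mul_mk, pow_zero, pow_one, one_pow, mul_one, one_mul, m5p4, m6p4 K β hβ, m5n4, m6n4 K β hβ]
  try norm_num

lemma ev50 (hβ : β ^ 2 = -2) : rho K β hβ (hmk 5 0) = ((1 : ℚ), (1 : ℚ), ((-1) : ℚ), ((-1) : ℚ), (!![0, (-1); 1, 0] : Matrix (Fin 2) (Fin 2) ℚ), (!![0, (-1); (-1), -β] : Matrix (Fin 2) (Fin 2) K)) := by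
  rw [rho_apply, show h1 (hmk 5 0) = 5 from rfl, show h2 (hmk 5 0) = 0 from rfl,
    show ((5 : ZMod 8)).val = 5 from rfl, show ((0 : ZMod 2)).val = 0 from rfl]
  simp only [X, Y, prodPow, Prod.mk_mul_mk, pow_zero, pow_one, one_pow, mul_one, one_mul, m5p5, m6p5 K β hβ]
  try norm_num

lemma ev51 (hβ : β ^ 2 = -2) : rho K β hβ (hmk 5 1) = ((1 : ℚ), ((-1) : ℚ), ((-1) : ℚ), (1 : ℚ), (!![0, 1; 1, 0] : Matrix (Fin 2) (Fin 2) ℚ), (!![-β, 1; 1, β] : Matrix (Fin 2) (Fin 2) K)) := by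
  rw [rho_apply, show h1 (hmk 5 1) = 5 from rfl, show h2 (hmk 5 1) = 1 from rfl,
    show ((5 : ZMod 8)).val = 5 from rfl, show ((1 : ZMod 2)).val = 1 from rfl]
  simp only [X, Y, prodPow, Prod.mk_mul_mk, pow_zero, pow_one, one_pow, mul_one, one_mul, m5p5, m6p5 K β hβ, m5n5, m6n5 K β hβ]
  try norm_num

lemma ev60 (hβ : β ^ 2 = -2) : rho K β hβ (hmk 6 0) = ((1 : ℚ), (1 : ℚ), (1 : ℚ), (1 : ℚ), (!![(-1), 0; 0, (-1)] : Matrix (Fin 2) (Fin 2) ℚ), (!![(-1), -β; -β, 1] : Matrix (Fin 2) (Fin 2) K)) := by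
  rw [rho_apply, show h1 (hmk 6 0) = 6 from rfl, show h2 (hmk 6 0) = 0 from rfl,
    show ((6 : ZMod 8)).val = 6 from rfl, show ((0 : ZMod 2)).val = 0 from rfl]
  simp only [X, Y, prodPow, Prod.mk_mul_mk, pow_zero, pow_one, one_pow, mul_one, one_mul, m5p6, m6p6 K β hβ]
  try norm_num

lemma ev61 (hβ : β ^ 2 = -2) : rho K β hβ (hmk 6 1) = ((1 : ℚ), ((-1) : ℚ), (1 : ℚ), ((-1) : ℚ), (!![(-1), 0; 0, 1] : Matrix (Fin 2) (Fin 2) ℚ), (!![1, β; 0, (-1)] : Matrix (Fin 2) (Fin 2) K)) := by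
  rw [rho_apply, show h1 (hmk 6 1) = 6 from rfl, show h2 (hmk 6 1) = 1 from rfl,
    show ((6 : ZMod 8)).val = 6 from rfl, show ((1 : ZMod 2)).val = 1 from rfl]
  simp only [X, Y, prodPow, Prod.mk_mul_mk, pow_zero, pow_one, one_pow, mul_one, one_mul, m5p6, m6p6 K β hβ, m5n6, m6n6 K β hβ]
  try norm_num

lemma ev70 (hβ : β ^ 2 = -2) : rho K β hβ (hmk 7 0) = ((1 : ℚ), (1 : ℚ), ((-1) : ℚ), ((-1) : ℚ), (!![0, 1; (-1), 0] : Matrix (Fin 2) (Fin 2) ℚ), (!![-β, 1; 1, 0] : Matrix (Fin 2) (Fin 2) K)) := by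
  rw [rho_apply, show h1 (hmk 7 0) = 7 from rfl, show h2 (hmk 7 0) = 0 from rfl,
    show ((7 : ZMod 8)).val = 7 from rfl, show ((0 : ZMod 2)).val = 0 from rfl]
  simp only [X, Y, prodPow, Prod.mk_mul_mk, pow_zero, pow_one, one_pow, mul_one, one_mul, m5p7, m6p7 K β hβ]
  try norm_num

lemma ev71 (hβ : β ^ 2 = -2) : rho K β hβ (hmk 7 1) = ((1 : ℚ), ((-1) : ℚ), ((-1) : ℚ), (1 : ℚ), (!![0, (-1); (-1), 0] : Matrix (Fin 2) (Fin 2) ℚ), (!![0, (-1); 1, 0] : Matrix (Fin 2) (Fin 2) K)) := by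
  rw [rho_apply, show h1 (hmk 7 1) = 7 from rfl, show h2 (hmk 7 1) = 1 from rfl,
    show ((7 : ZMod 8)).val = 7 from rfl, show ((1 : ZMod 2)).val = 1 from rfl]
  simp only [X, Y, prodPow, Prod.mk_mul_mk, pow_zero, pow_one, one_pow, mul_one, one_mul, m5p7, m6p7 K β hβ, m5n7, m6n7 K β hβ]
  try norm_num

lemma span_top (hK : Module.finrank ℚ K = 2) (hβ : β ^ 2 = -2) :
    Submodule.span ℚ (Set.range ⇑(rho K β hβ)) = ⊤ := by
  haveI : CharZero K := charZero_of_injective_algebraMap (algebraMap ℚ K).injective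
  rw [eq_top_iff]
  rintro ⟨q1, q2, q3, q4, m, n⟩ -
  obtain ⟨u00, v00, hn00⟩ := K_rep K hK β hβ (n 0 0)
  obtain ⟨u01, v01, hn01⟩ := K_rep K hK β hβ (n 0 1)
  obtain ⟨u10, v10, hn10⟩ := K_rep K hK β hβ (n 1 0)
  obtain ⟨u11, v11, hn11⟩ := K_rep K hK β hβ (n 1 1)
  have hn : n = !![(u00 : K) + (v00 : K) * β, (u01 : K) + (v01 : K) * β;
      (u10 : K) + (v10 : K) * β, (u11 : K) + (v11 : K) * β] := by
    ext i j
    fin_cases i <;> fin_cases j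
    · exact hn00
    · exact hn01
    · exact hn10
    · exact hn11
  have key : ((q1, q2, q3, q4, m, n) : A2 K) =
      ((1/16) * q1 + (1/16) * q2 + (1/16) * q3 + (1/16) * q4 + (1/8) * (m 0 0) + (1/8) * (m 1 1) + (1/4) * u00 + (1/4) * u11 : ℚ) • rho K β hβ (hmk 0 0) +
        ((1/16) * q1 + (-1/16) * q2 + (1/16) * q3 + (-1/16) * q4 + (1/8) * (m 0 0) + (-1/8) * (m 1 1) + (1/4) * u00 + (-1/2) * v01 + (-1/4) * u11 : ℚ) • rho K β hβ (hmk 0 1) +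
        ((1/16) * q1 + (1/16) * q2 + (-1/16) * q3 + (-1/16) * q4 + (-1/8) * (m 0 1) + (1/8) * (m 1 0) + (1/2) * v00 + (1/4) * u01 + (1/4) * u10 : ℚ) • rho K β hβ (hmk 1 0) +
        ((1/16) * q1 + (-1/16) * q2 + (-1/16) * q3 + (1/16) * q4 + (1/8) * (m 0 1) + (1/8) * (m 1 0) + (1/2) * v00 + (1/4) * u01 + (1/4) * u10 + (-1/2) * v11 : ℚ) • rho K β hβ (hmk 1 1) +
        ((1/16) * q1 + (1/16) * q2 + (1/16) * q3 + (1/16) * q4 + (-1/8) * (m 0 0) + (-1/8) * (m 1 1) + (-1/4) * u00 + (1/2) * v01 + (1/2) * v10 + (1/4) * u11 : ℚ) • rho K β hβ (hmk 2 0) +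
        ((1/16) * q1 + (-1/16) * q2 + (1/16) * q3 + (-1/16) * q4 + (-1/8) * (m 0 0) + (1/8) * (m 1 1) + (-1/4) * u00 + (1/2) * v10 + (1/4) * u11 : ℚ) • rho K β hβ (hmk 2 1) +
        ((1/16) * q1 + (1/16) * q2 + (-1/16) * q3 + (-1/16) * q4 + (1/8) * (m 0 1) + (-1/8) * (m 1 0) + (-1/4) * u01 + (-1/4) * u10 + (1/2) * v11 : ℚ) • rho K β hβ (hmk 3 0) +
        ((1/16) * q1 + (-1/16) * q2 + (-1/16) * q3 + (1/16) * q4 + (-1/8) * (m 0 1) + (-1/8) * (m 1 0) + (1/4) * u01 + (-1/4) * u10 : ℚ) • rho K β hβ (hmk 3 1) +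
        ((1/16) * q1 + (1/16) * q2 + (1/16) * q3 + (1/16) * q4 + (1/8) * (m 0 0) + (1/8) * (m 1 1) + (-1/4) * u00 + (-1/4) * u11 : ℚ) • rho K β hβ (hmk 4 0) +
        ((1/16) * q1 + (-1/16) * q2 + (1/16) * q3 + (-1/16) * q4 + (1/8) * (m 0 0) + (-1/8) * (m 1 1) + (-1/4) * u00 + (1/2) * v01 + (1/4) * u11 : ℚ) • rho K β hβ (hmk 4 1) +
        ((1/16) * q1 + (1/16) * q2 + (-1/16) * q3 + (-1/16) * q4 + (-1/8) * (m 0 1) + (1/8) * (m 1 0) + (-1/2) * v00 + (-1/4) * u01 + (-1/4) * u10 : ℚ) • rho K β hβ (hmk 5 0) +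
        ((1/16) * q1 + (-1/16) * q2 + (-1/16) * q3 + (1/16) * q4 + (1/8) * (m 0 1) + (1/8) * (m 1 0) + (-1/2) * v00 + (-1/4) * u01 + (-1/4) * u10 + (1/2) * v11 : ℚ) • rho K β hβ (hmk 5 1) +
        ((1/16) * q1 + (1/16) * q2 + (1/16) * q3 + (1/16) * q4 + (-1/8) * (m 0 0) + (-1/8) * (m 1 1) + (1/4) * u00 + (-1/2) * v01 + (-1/2) * v10 + (-1/4) * u11 : ℚ) • rho K β hβ (hmk 6 0) +
        ((1/16) * q1 + (-1/16) * q2 + (1/16) * q3 + (-1/16) * q4 + (-1/8) * (m 0 0) + (1/8) * (m 1 1) + (1/4) * u00 + (-1/2) * v10 + (-1/4) * u11 : ℚ) • rho K β hβ (hmk 6 1) +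
        ((1/16) * q1 + (1/16) * q2 + (-1/16) * q3 + (-1/16) * q4 + (1/8) * (m 0 1) + (-1/8) * (m 1 0) + (1/4) * u01 + (1/4) * u10 + (-1/2) * v11 : ℚ) • rho K β hβ (hmk 7 0) +
        ((1/16) * q1 + (-1/16) * q2 + (-1/16) * q3 + (1/16) * q4 + (-1/8) * (m 0 1) + (-1/8) * (m 1 0) + (-1/4) * u01 + (1/4) * u10 : ℚ) • rho K β hβ (hmk 7 1) := by
    rw [hn]
    simp only [ev00 K β hβ, ev01 K β hβ, ev10 K β hβ, ev11 K β hβ, ev20 K β hβ, ev21 K β hβ, ev30 K β hβ, ev31 K β hβ, ev40 K β hβ, ev41 K β hβ, ev50 K β hβ, ev51 K β hβ, ev60 K β hβ, ev61 K β hβ, ev70 K β hβ, ev71 K β hβ]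
    simp only [Prod.smul_mk, Prod.mk_add_mk, smul_eq_mul, Prod.mk.injEq]
    refine ⟨?_, ?_, ?_, ?_, ?_, ?_⟩
    · ring
    · ring
    · ring
    · ring
    · ext i j
      fin_cases i <;> fin_cases j <;>
        simp [Matrix.add_apply, Matrix.smul_apply, smul_eq_mul] <;> ring1
    · ext i j
      fin_cases i <;> fin_cases j <;>
        simp only [Matrix.add_apply, Matrix.smul_apply] <;>
        simp [Algebra.smul_def] <;> push_cast <;> ring1
  rw [key]
  repeat
    first
      | exact Submodule.smul_mem _ _ (Submodule.subset_span (Set.mem_range_self _))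
      | refine Submodule.add_mem _ ?_
          (Submodule.smul_mem _ _ (Submodule.subset_span (Set.mem_range_self _)))

lemma frA (K : Type) [Field K] [Algebra ℚ K] (hK : Module.finrank ℚ K = 2) :
    Module.finrank ℚ (A2 K) = 16 := by
  haveI : Module.Finite ℚ K := Module.finite_of_finrank_eq_succ (n := 1) hK
  have hMK : Module.finrank ℚ (Matrix (Fin 2) (Fin 2) K) = 8 := by
    have h := Module.finrank_mul_finrank ℚ K (Matrix (Fin 2) (Fin 2) K)
    rw [hK, Module.finrank_matrix] at h
    simpa using h.symm
  have hMQ : Module.finrank ℚ (Matrix (Fin 2) (Fin 2) ℚ) = 4 := by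
    rw [Module.finrank_matrix]
    simp [Module.finrank_self]
  rw [show (16 : ℕ) = 1 + (1 + (1 + (1 + (4 + 8)))) from rfl]
  rw [Module.finrank_prod, Module.finrank_prod, Module.finrank_prod, Module.finrank_prod,
    Module.finrank_prod, Module.finrank_self, hMQ, hMK]

lemma frMA : Module.finrank ℚ (MonoidAlgebra ℚ H) = 16 := by
  have h : Module.finrank ℚ (H →₀ ℚ) = Fintype.card H := Module.finrank_finsupp_self ℚ
  rw [cardH] at h
  exact (MonoidAlgebra.coeffLinearEquiv ℚ).finrank_eq.trans h

end SD16

/-- Let `D₁₆⁻` be the semidihedral group of order 16 with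
presentation `⟨a, b | a⁸ = b² = 1, b a b⁻¹ = a³⟩` (any group of order 16
generated by such `a, b` is this group). Then `ℚ[D₁₆⁻]` is isomorphic as a
`ℚ`-algebra to `ℚ × ℚ × ℚ × ℚ × M₂(ℚ) × M₂(ℚ(√−2))`, where `ℚ(√−2)` is (any
realization of) the quadratic field obtained by adjoining a square root of `−2`
to `ℚ`. -/
theorem rational_group_algebra_semidihedral_sixteen_minus
    (G : Type) [Group G] [Fintype G] (hcard : Fintype.card G = 16)
    (a b : G) (ha : a ^ 8 = 1) (hb : b ^ 2 = 1) (hrel : b * a * b⁻¹ = a ^ 3)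
    (hgen : Subgroup.closure {a, b} = ⊤)
    (K : Type) [Field K] [Algebra ℚ K] (hK : Module.finrank ℚ K = 2)
    (β : K) (hβ : β ^ 2 = -2) :
    Nonempty (MonoidAlgebra ℚ G ≃ₐ[ℚ]
      (ℚ × ℚ × ℚ × ℚ × Matrix (Fin 2) (Fin 2) ℚ × Matrix (Fin 2) (Fin 2) K)) := by
  classical
  have hba : b * a = a ^ 3 * b := by
    rw [← hrel]; group
  set ψ : SD16.H →* G := SD16.sdHom a b ha hb hba with hψ
  have hψa : ψ (SD16.hmk 1 0) = a := by
    rw [hψ, SD16.sdHom_apply, show SD16.h1 (SD16.hmk 1 0) = 1 from rfl,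
      show SD16.h2 (SD16.hmk 1 0) = 0 from rfl, show ((1 : ZMod 8)).val = 1 from rfl,
      show ((0 : ZMod 2)).val = 0 from rfl, pow_one, pow_zero, mul_one]
  have hψb : ψ (SD16.hmk 0 1) = b := by
    rw [hψ, SD16.sdHom_apply, show SD16.h1 (SD16.hmk 0 1) = 0 from rfl,
      show SD16.h2 (SD16.hmk 0 1) = 1 from rfl, show ((0 : ZMod 8)).val = 0 from rfl,
      show ((1 : ZMod 2)).val = 1 from rfl, pow_one, pow_zero, one_mul]
  have hle : Subgroup.closure ({a, b} : Set G) ≤ ψ.range := by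
    rw [Subgroup.closure_le]
    rintro x hx
    rcases hx with rfl | hx
    · exact ⟨SD16.hmk 1 0, hψa⟩
    · rcases hx with rfl
      exact ⟨SD16.hmk 0 1, hψb⟩
  have hrange : ψ.range = ⊤ := le_antisymm le_top (hgen ▸ hle)
  have hbij : Function.Bijective ψ :=
    (Fintype.bijective_iff_surjective_and_card ψ).2
      ⟨MonoidHom.range_eq_top.1 hrange, by rw [SD16.cardH, hcard]⟩
  let e : SD16.H ≃* G := MulEquiv.ofBijective ψ hbij
  let L : MonoidAlgebra ℚ SD16.H →ₐ[ℚ] SD16.A2 K :=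
    (MonoidAlgebra.lift ℚ (SD16.A2 K) SD16.H) (SD16.rho K β hβ)
  have hLsurj : Function.Surjective L := by
    have h1 : Submodule.span ℚ (Set.range ⇑(SD16.rho K β hβ))
        ≤ LinearMap.range L.toLinearMap := by
      rw [Submodule.span_le]
      rintro _ ⟨h, rfl⟩
      exact ⟨MonoidAlgebra.single h 1, by simp [L, MonoidAlgebra.lift_single]⟩
    have h2 := SD16.span_top K β hK hβ
    have h3 : LinearMap.range L.toLinearMap = ⊤ := top_le_iff.1 (h2 ▸ h1)
    intro z
    obtain ⟨w, hw⟩ := LinearMap.range_eq_top.1 h3 z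
    exact ⟨w, hw⟩
  haveI : Module.Finite ℚ (MonoidAlgebra ℚ SD16.H) :=
    Module.finite_of_finrank_eq_succ (n := 15) SD16.frMA
  haveI : Module.Finite ℚ (SD16.A2 K) :=
    Module.finite_of_finrank_eq_succ (n := 15) (SD16.frA K hK)
  have hfr : Module.finrank ℚ (MonoidAlgebra ℚ SD16.H) = Module.finrank ℚ (SD16.A2 K) := by
    rw [SD16.frMA, SD16.frA K hK]
  have hLinj : Function.Injective L :=
    (LinearMap.injective_iff_surjective_of_finrank_eq_finrank (f := L.toLinearMap) hfr).2 hLsurj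
  exact ⟨(MonoidAlgebra.domCongr ℚ ℚ e.symm).trans (AlgEquiv.ofBijective L ⟨hLinj, hLsurj⟩)⟩
end

section
/- Let G be a finite group and A an abelian subgroup of G such that every subgroup of A is normal in G. Let ℋ be the family of subgroups H of A such that A/H is cyclic and the commutator subgroup of G is not contained in H. Then for every noncommutative simple ring B: B is a quotient of ℚG (i.e., there is a surjective ring homomorphism ℚG → B) if and only if there exists H ∈ ℋ such that B is a quotient of ℚ[G/H]. -/
open Finset MonoidAlgebra
open scoped commutatorElement

private lemma shift_sum {B : Type} [Ring B] {z : B} {p : ℕ} (hz : z ^ p = 1) :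
    z * ∑ j ∈ Finset.range p, z ^ j = ∑ j ∈ Finset.range p, z ^ j := by
  have h2 : (∑ j ∈ Finset.range p, z ^ (j + 1)) + z ^ 0
      = (∑ j ∈ Finset.range p, z ^ j) + z ^ p :=
    (Finset.sum_range_succ' (fun j => z ^ j) p).symm.trans
      (Finset.sum_range_succ (fun j => z ^ j) p)
  rw [pow_zero, hz] at h2
  rw [Finset.mul_sum]
  simp_rw [← pow_succ']
  exact add_right_cancel h2

private lemma pow_shift_sum {B : Type} [Ring B] {z : B} {p : ℕ} (hz : z ^ p = 1) (n : ℕ) :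
    z ^ n * ∑ j ∈ Finset.range p, z ^ j = ∑ j ∈ Finset.range p, z ^ j := by
  induction n with
  | zero => rw [pow_zero, one_mul]
  | succ n ih => rw [pow_succ', mul_assoc, ih, shift_sum hz]

private lemma sum_sq {B : Type} [Ring B] {z : B} {p : ℕ} (hz : z ^ p = 1) :
    (∑ j ∈ Finset.range p, z ^ j) * (∑ j ∈ Finset.range p, z ^ j)
      = p • ∑ j ∈ Finset.range p, z ^ j := by
  rw [Finset.sum_mul]
  rw [Finset.sum_congr rfl (fun j _ => pow_shift_sum hz j)]
  simp

private lemma central_idem_eq_zero_or_one {B : Type} [Ring B] [IsSimpleRing B]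
    {e : B} (he : e * e = e) (hc : ∀ t : B, t * e = e * t) : e = 0 ∨ e = 1 := by
  have hcen : e ∈ Subring.center B := Subring.mem_center_iff.mpr hc
  by_cases h0 : e = 0
  · exact Or.inl h0
  · right
    have hne : (⟨e, hcen⟩ : Subring.center B) ≠ 0 := by
      simp only [ne_eq, Subtype.ext_iff]; exact h0
    obtain ⟨u, hu⟩ := (IsSimpleRing.isField_center B).mul_inv_cancel hne
    have he' : (⟨e, hcen⟩ : Subring.center B) * ⟨e, hcen⟩ = ⟨e, hcen⟩ := by
      ext; exact he
    have h1 : (⟨e, hcen⟩ : Subring.center B) = 1 := by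
      calc (⟨e, hcen⟩ : Subring.center B) = ⟨e, hcen⟩ * (⟨e, hcen⟩ * u) := by rw [hu, mul_one]
        _ = (⟨e, hcen⟩ * ⟨e, hcen⟩) * u := (mul_assoc _ _ _).symm
        _ = 1 := by rw [he', hu]
    exact congrArg Subtype.val h1

private lemma S_eq_zero_abstract {B : Type} [Ring B] [IsSimpleRing B]
    {z W ι κ : B} {p k m : ℕ} (hkm : k * p = m)
    (hzp : z ^ p = 1) (hz : z ≠ 1)
    (hWS : W = k • ∑ j ∈ Finset.range p, z ^ j)
    (hWcen : ∀ t, t * W = W * t)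
    (hιcen : ∀ t, t * ι = ι * t)
    (hκcen : ∀ t, t * κ = κ * t)
    (hιm : ι * (m : B) = 1)
    (hκk : κ * (k : B) = 1) :
    ∑ j ∈ Finset.range p, z ^ j = 0 := by
  set S := ∑ j ∈ Finset.range p, z ^ j with hS
  have hSS : S * S = p • S := sum_sq hzp
  have hzW : z * W = W := by rw [hWS, mul_smul_comm, shift_sum hzp]
  have hWW : W * W = (m : B) * W := by
    rw [hWS, smul_mul_assoc, mul_smul_comm, hSS, smul_smul, smul_smul, ← nsmul_eq_mul, smul_smul,
      ← hkm]
    congr 1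
    ring
  have hEE : (ι * W) * (ι * W) = ι * W := by
    calc (ι * W) * (ι * W) = ι * ((W * ι) * W) := by
          rw [mul_assoc, mul_assoc, ← mul_assoc W ι W]
      _ = ι * (ι * (W * W)) := by rw [hιcen W, mul_assoc]
      _ = ι * (ι * ((m : B) * W)) := by rw [hWW]
      _ = ι * ((ι * (m : B)) * W) := by rw [mul_assoc]
      _ = ι * W := by rw [hιm, one_mul]
  have hEcen : ∀ t, t * (ι * W) = (ι * W) * t := by
    intro t
    rw [← mul_assoc, hιcen t, mul_assoc, hWcen t, ← mul_assoc]
  rcases central_idem_eq_zero_or_one hEE hEcen with hE0 | hE1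
  · have hWzero : W = 0 := by
      have hmE : (m : B) * (ι * W) = W := by
        rw [← mul_assoc, hιcen ((m : B)), hιm, one_mul]
      rw [← hmE, hE0, mul_zero]
    have hkS : (k : B) * S = 0 := by
      rw [← nsmul_eq_mul, ← hWS, hWzero]
    calc S = (κ * (k : B)) * S := by rw [hκk, one_mul]
      _ = κ * ((k : B) * S) := mul_assoc _ _ _
      _ = 0 := by rw [hkS, mul_zero]
  · exfalso
    apply hz
    have hzE : z * (ι * W) = ι * W := by
      rw [← mul_assoc, hιcen z, mul_assoc, hzW]
    rw [hE1, mul_one] at hzE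
    exact hzE

private lemma sum_pow_eq_zero
    {G B : Type} [Group G] [Finite G] [Ring B] [IsSimpleRing B]
    (A : Subgroup G)
    (hnormal : ∀ H : Subgroup G, H ≤ A → H.Normal)
    (f : MonoidAlgebra ℚ G →+* B) (hf : Function.Surjective f)
    {p : ℕ} (hp : p.Prime) {c : G} (hc : c ∈ A)
    (hzp : f (MonoidAlgebra.single c 1) ^ p = 1)
    (hz : f (MonoidAlgebra.single c 1) ≠ 1) :
    ∑ j ∈ Finset.range p, f (MonoidAlgebra.single c 1) ^ j = 0 := by
  classical
  haveI : Fact p.Prime := ⟨hp⟩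
  set z := f (MonoidAlgebra.single c 1) with hzdef
  set S := ∑ j ∈ Finset.range p, z ^ j with hSdef
  set m := orderOf c with hmdef
  have hm : 0 < m := orderOf_pos c
  have hzm : z ^ m = 1 := by
    rw [hzdef, ← map_pow, MonoidAlgebra.single_pow, pow_orderOf_eq_one, one_pow,
      ← MonoidAlgebra.one_def, map_one]
  have hpm : p ∣ m := by
    have ho : orderOf z = p := orderOf_eq_prime hzp hz
    exact ho ▸ orderOf_dvd_of_pow_eq_one hzm
  set k := m / p with hkdef
  have hkm : k * p = m := Nat.div_mul_cancel hpm
  have hk0 : k ≠ 0 := by intro h; rw [h, zero_mul] at hkm; omega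
  set Sfin := (Finset.range m).image (c ^ ·) with hSfin
  have hmemiff : ∀ x : G, x ∈ Sfin ↔ x ∈ Subgroup.zpowers c := fun x =>
    mem_zpowers_iff_mem_range_orderOf.symm
  have hN : (Subgroup.zpowers c).Normal := hnormal _ (Subgroup.zpowers_le.mpr hc)
  set σ : MonoidAlgebra ℚ G := ∑ x ∈ Sfin, MonoidAlgebra.single x 1 with hσ
  have hσg : ∀ g : G, MonoidAlgebra.single (R := ℚ) g 1 * σ = σ * MonoidAlgebra.single g 1 := by
    intro g
    rw [hσ, Finset.mul_sum, Finset.sum_mul]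
    simp_rw [MonoidAlgebra.single_mul_single, one_mul]
    refine Finset.sum_nbij' (fun x => g * x * g⁻¹) (fun x => g⁻¹ * x * g) ?_ ?_ ?_ ?_ ?_
    · intro x hx
      rw [hmemiff] at hx ⊢
      exact hN.conj_mem x hx g
    · intro x hx
      rw [hmemiff] at hx ⊢
      simpa using hN.conj_mem x hx g⁻¹
    · intro x _; group
    · intro x _; group
    · intro x _
      congr 1
      group
  have hσcen : ∀ t : MonoidAlgebra ℚ G, t * σ = σ * t := by
    intro t
    induction t using MonoidAlgebra.induction_linear with
    | zero => simp
    | add a b iha ihb => rw [add_mul, mul_add, iha, ihb]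
    | single a r =>
        show MonoidAlgebra.single a r * σ = σ * MonoidAlgebra.single a r
        have h1 : (MonoidAlgebra.single a r : MonoidAlgebra ℚ G)
            = MonoidAlgebra.single 1 r * MonoidAlgebra.single a 1 := by
          rw [MonoidAlgebra.single_mul_single, one_mul, mul_one]
        rw [h1, mul_assoc, hσg a, ← mul_assoc, MonoidAlgebra.single_one_comm, mul_assoc]
  have hWcen : ∀ t : B, t * f σ = f σ * t := by
    intro t; obtain ⟨s, rfl⟩ := hf t
    rw [← map_mul, ← map_mul, hσcen s]
  have hinj : ∀ x ∈ Finset.range m, ∀ y ∈ Finset.range m, c ^ x = c ^ y → x = y := by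
    intro x hx y hy hxy
    exact pow_injOn_Iio_orderOf (Finset.mem_range.mp hx) (Finset.mem_range.mp hy) hxy
  have hW : f σ = ∑ j ∈ Finset.range m, z ^ j := by
    rw [hσ, map_sum, Finset.sum_image hinj]
    refine Finset.sum_congr rfl fun j _ => ?_
    rw [hzdef, ← map_pow, MonoidAlgebra.single_pow, one_pow]
  have hperiod : ∀ n : ℕ, ∑ j ∈ Finset.range (n * p), z ^ j = n • S := by
    intro n
    induction n with
    | zero => simp
    | succ n ih =>
        have hzi : ∀ i, z ^ (n * p + i) = z ^ i := by
          intro i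
          rw [pow_add, mul_comm n p, pow_mul, hzp, one_pow, one_mul]
        rw [Nat.succ_mul, Finset.sum_range_add, ih]
        simp_rw [hzi]
        rw [succ_nsmul, hSdef]
  have hWS : f σ = k • S := by rw [hW, ← hkm, hperiod k]
  have hρ : ∀ q r : ℚ, f (MonoidAlgebra.single 1 q) * f (MonoidAlgebra.single 1 r)
      = f (MonoidAlgebra.single (1 : G) (q * r)) := by
    intro q r; rw [← map_mul, MonoidAlgebra.single_mul_single, one_mul]
  have hρ1 : f (MonoidAlgebra.single (1 : G) (1 : ℚ)) = 1 := by
    rw [← MonoidAlgebra.one_def, map_one]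
  have hρcen : ∀ (q : ℚ) (t : B),
      t * f (MonoidAlgebra.single 1 q) = f (MonoidAlgebra.single 1 q) * t := by
    intro q t; obtain ⟨s, rfl⟩ := hf t
    rw [← map_mul, ← map_mul, MonoidAlgebra.single_one_comm]
  have hinv : ∀ n : ℕ, n ≠ 0 → f (MonoidAlgebra.single (1 : G) ((n : ℚ)⁻¹)) * (n : B) = 1 := by
    intro n hn
    rw [← map_natCast f n, MonoidAlgebra.natCast_def, hρ,
      inv_mul_cancel₀ (by exact_mod_cast hn : ((n : ℚ)) ≠ 0), hρ1]
  exact S_eq_zero_abstract hkm hzp hz hWS hWcen (hρcen _) (hρcen _) (hinv m (by omega))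
    (hinv k hk0)

private lemma sum_zmod {M : Type} [AddCommMonoid M] {p : ℕ} [NeZero p] (h : ℕ → M) :
    ∑ j : ZMod p, h (ZMod.val j) = ∑ j ∈ Finset.range p, h j := by
  cases p with
  | zero => exact absurd rfl (NeZero.ne 0)
  | succ n => exact Fin.sum_univ_eq_sum_range (fun j => h j) (n + 1)

private lemma p_eq_zero {B : Type} [Ring B] {p : ℕ} (hp : p.Prime) {x y : B}
    (hcomm : x * y = y * x) (hy : y ^ p = 1)
    (hSy : ∑ j ∈ Finset.range p, y ^ j = 0)
    (hT : ∀ i : ℕ, i < p → ∑ j ∈ Finset.range p, (x * y ^ i) ^ j = 0) : (p : B) = 0 := by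
  haveI : Fact p.Prime := ⟨hp⟩
  have hxy : Commute x y := hcomm
  have hyred : ∀ n : ℕ, y ^ n = y ^ (n % p) := by
    intro n
    conv_lhs => rw [← Nat.div_add_mod n p]
    rw [pow_add, pow_mul, hy, one_pow, one_mul]
  have hstep : ∀ i j : ZMod p, (x * y ^ i.val) ^ j.val = x ^ j.val * y ^ ((i * j).val) := by
    intro i j
    rw [(hxy.pow_right i.val).mul_pow, ← pow_mul, ZMod.val_mul, ← hyred]
  have htot : ∑ i : ZMod p, ∑ j : ZMod p, x ^ j.val * y ^ ((i * j).val) = 0 := by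
    rw [Finset.sum_eq_zero]
    intro i _
    have h1 : ∑ j : ZMod p, x ^ j.val * y ^ ((i * j).val)
        = ∑ j : ZMod p, (x * y ^ i.val) ^ j.val := by
      refine Finset.sum_congr rfl fun j _ => (hstep i j).symm
    rw [h1, sum_zmod (fun n => (x * y ^ i.val) ^ n)]
    exact hT i.val (ZMod.val_lt i)
  rw [Finset.sum_comm] at htot
  have hinner : ∀ j : ZMod p, j ≠ 0 → ∑ i : ZMod p, x ^ j.val * y ^ ((i * j).val) = 0 := by
    intro j hj
    rw [← Finset.mul_sum]
    have hbij : ∑ i : ZMod p, y ^ ((i * j).val) = ∑ i : ZMod p, y ^ i.val := by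
      exact Fintype.sum_equiv (Equiv.mulRight₀ j hj) _ _ (fun i => rfl)
    rw [hbij, sum_zmod (fun n => y ^ n), hSy, mul_zero]
  rw [Finset.sum_eq_single_of_mem (0 : ZMod p) (Finset.mem_univ 0)
    (fun j _ hj => hinner j hj)] at htot
  have h0 : ∀ i : ZMod p, x ^ (0 : ZMod p).val * y ^ ((i * 0).val) = 1 := by
    intro i
    rw [ZMod.val_zero, pow_zero, mul_zero, ZMod.val_zero, pow_zero, one_mul]
  rw [Finset.sum_congr rfl (fun i _ => h0 i), Finset.sum_const, Finset.card_univ,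
    ZMod.card, nsmul_eq_mul, mul_one] at htot
  exact htot

private lemma key_or
    {G B : Type} [Group G] [Finite G] [Ring B] [IsSimpleRing B]
    (A : Subgroup G) (hab : ∀ x y : A, x * y = y * x)
    (hnormal : ∀ H : Subgroup G, H ≤ A → H.Normal)
    (f : MonoidAlgebra ℚ G →+* B) (hf : Function.Surjective f)
    {p : ℕ} (hp : p.Prime) {a b : G} (ha : a ∈ A) (hb : b ∈ A)
    (hx : f (MonoidAlgebra.single a 1) ^ p = 1) (hy : f (MonoidAlgebra.single b 1) ^ p = 1) :
    f (MonoidAlgebra.single b 1) = 1 ∨ ∃ i : ℕ, f (MonoidAlgebra.single (a * b ^ i) 1) = 1 := by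
  by_contra hcon
  push_neg at hcon
  obtain ⟨hy1, hi1⟩ := hcon
  set x := f (MonoidAlgebra.single a 1) with hxdef
  set y := f (MonoidAlgebra.single b 1) with hydef
  have hcab : a * b = b * a := by
    have := hab ⟨a, ha⟩ ⟨b, hb⟩
    exact congrArg Subtype.val this
  have hxy : x * y = y * x := by
    rw [hxdef, hydef, ← map_mul, ← map_mul, MonoidAlgebra.single_mul_single,
      MonoidAlgebra.single_mul_single, hcab]
  have hxyi : ∀ i : ℕ, f (MonoidAlgebra.single (a * b ^ i) 1) = x * y ^ i := by
    intro i
    rw [hxdef, hydef, ← map_pow, ← map_mul, MonoidAlgebra.single_pow, one_pow,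
      MonoidAlgebra.single_mul_single, mul_one]
  have hSy : ∑ j ∈ Finset.range p, y ^ j = 0 :=
    sum_pow_eq_zero A hnormal f hf hp hb hy hy1
  have hT : ∀ i : ℕ, i < p → ∑ j ∈ Finset.range p, (x * y ^ i) ^ j = 0 := by
    intro i _
    have habi : a * b ^ i ∈ A := A.mul_mem ha (A.pow_mem hb i)
    have hpow : f (MonoidAlgebra.single (a * b ^ i) 1) ^ p = 1 := by
      rw [hxyi i, ((Commute.pow_right hxy i)).mul_pow, ← pow_mul, mul_comm i p, pow_mul, hy,
        one_pow, hx, one_mul]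
    have := sum_pow_eq_zero A hnormal f hf hp habi hpow (hi1 i)
    rw [hxyi i] at this
    exact this
  have hp0 : (p : B) = 0 := p_eq_zero hp hxy hy hSy hT
  have hone : f (MonoidAlgebra.single (1 : G) ((p : ℚ)⁻¹)) * (p : B) = 1 := by
    rw [← map_natCast f p, MonoidAlgebra.natCast_def, ← map_mul,
      MonoidAlgebra.single_mul_single, one_mul,
      inv_mul_cancel₀ (by exact_mod_cast hp.ne_zero : ((p : ℚ)) ≠ 0), ← MonoidAlgebra.one_def,
      map_one]
  rw [hp0, mul_zero] at hone
  exact zero_ne_one hone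

private lemma exists_generator {Q : Type} [Group Q] [Finite Q]
    (hcomm : ∀ u v : Q, u * v = v * u)
    (hK : ∀ p : ℕ, p.Prime → ∀ u v : Q, u ^ p = 1 → v ^ p = 1 →
      v = 1 ∨ ∃ i : ℕ, u * v ^ i = 1) :
    ∃ g : Q, ∀ x : Q, x ∈ Subgroup.zpowers g := by
  letI : CommGroup Q := { (inferInstance : Group Q) with mul_comm := hcomm }
  obtain ⟨g, hg⟩ := Monoid.exists_orderOf_eq_exponent (Monoid.ExponentExists.of_finite (G := Q))
  set N := Monoid.exponent Q with hNdef
  have hN0 : N ≠ 0 := Monoid.exponent_ne_zero_of_finite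
  refine ⟨g, ?_⟩
  by_contra hcon
  push_neg at hcon
  obtain ⟨x, hx⟩ := hcon
  set Z := Subgroup.zpowers g with hZ
  haveI hZn : Z.Normal := ⟨fun n hn q => by
    rw [hcomm q n, mul_assoc, mul_inv_cancel, mul_one]; exact hn⟩
  set Q' := Q ⧸ Z with hQ'
  haveI : Finite Q' := Finite.of_surjective _ (QuotientGroup.mk_surjective (s := Z))
  have hxbar : (QuotientGroup.mk x : Q') ≠ 1 := by
    rw [ne_eq, QuotientGroup.eq_one_iff]
    exact hx
  set d := orderOf (QuotientGroup.mk x : Q') with hd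
  have hd0 : d ≠ 0 := (orderOf_pos _).ne'
  have hd1 : d ≠ 1 := fun h => hxbar (orderOf_eq_one_iff.mp h)
  set p := d.minFac with hpdef
  have hp : p.Prime := Nat.minFac_prime hd1
  set u₁ := x ^ (d / p) with hu₁
  have hdp0 : d / p ≠ 0 :=
    Nat.div_ne_zero_iff.mpr ⟨hp.ne_zero, Nat.minFac_le (Nat.pos_of_ne_zero hd0)⟩
  have hdpd : d / p < d := Nat.div_lt_self (Nat.pos_of_ne_zero hd0) hp.one_lt
  have hu₁bar : (QuotientGroup.mk u₁ : Q') ≠ 1 := by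
    rw [hu₁, QuotientGroup.mk_pow]
    exact pow_ne_one_of_lt_orderOf hdp0 (hd ▸ hdpd)
  have hu₁Z : u₁ ∉ Z := fun h => hu₁bar (QuotientGroup.eq_one_iff _ |>.mpr h)
  have hu₁p : u₁ ^ p ∈ Z := by
    rw [← QuotientGroup.eq_one_iff]
    rw [QuotientGroup.mk_pow, hu₁, QuotientGroup.mk_pow, ← pow_mul,
      Nat.div_mul_cancel (Nat.minFac_dvd d)]
    exact pow_orderOf_eq_one _
  obtain ⟨mm, hmm⟩ := Subgroup.mem_zpowers_iff.mp hu₁p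
  haveI : Fact p.Prime := ⟨hp⟩
  have hu₁pbar : (QuotientGroup.mk u₁ : Q') ^ p = 1 := by
    rw [← QuotientGroup.mk_pow]
    exact (QuotientGroup.eq_one_iff _).mpr hu₁p
  have hordu₁bar : orderOf (QuotientGroup.mk u₁ : Q') = p :=
    orderOf_eq_prime hu₁pbar hu₁bar
  have hpN : p ∣ N := by
    have h1 : orderOf (QuotientGroup.mk u₁ : Q') ∣ orderOf u₁ :=
      orderOf_map_dvd (QuotientGroup.mk' Z) u₁
    have h2 : orderOf u₁ ∣ N := Monoid.order_dvd_exponent u₁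
    exact hordu₁bar ▸ dvd_trans h1 h2
  have hNp : p * (N / p) = N := Nat.mul_div_cancel' hpN
  have hNdp0 : N / p ≠ 0 := by
    intro h
    rw [h, mul_zero] at hNp
    exact hN0 hNp.symm
  have hzpow : g ^ (mm * ((N / p : ℕ) : ℤ)) = 1 := by
    rw [zpow_mul, hmm, zpow_natCast, ← pow_mul, hNp]
    exact Monoid.pow_exponent_eq_one u₁
  have hdvd : (N : ℤ) ∣ mm * ((N / p : ℕ) : ℤ) := by
    have h6 := orderOf_dvd_iff_zpow_eq_one.mpr hzpow
    rwa [hg] at h6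
  have hpmm : (p : ℤ) ∣ mm := by
    have h3 : ((p : ℤ) * ((N / p : ℕ) : ℤ)) ∣ mm * ((N / p : ℕ) : ℤ) := by
      rw [← Nat.cast_mul, hNp]
      exact hdvd
    have hne : ((N / p : ℕ) : ℤ) ≠ 0 := by exact_mod_cast hNdp0
    exact (mul_dvd_mul_iff_right hne).mp h3
  obtain ⟨mm', hmm'⟩ := hpmm
  set v := u₁ * (g ^ mm')⁻¹ with hv
  have hgmm : (g ^ mm') ^ p = u₁ ^ p := by
    rw [← zpow_natCast (g ^ mm') p, ← zpow_mul, ← hmm, hmm', mul_comm (p : ℤ) mm']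
  have hvp : v ^ p = 1 := by
    rw [hv, mul_pow, inv_pow, hgmm, mul_inv_cancel]
  have hvZ : v ∉ Z := by
    intro hvin
    apply hu₁Z
    have hrec : u₁ = v * g ^ mm' := by rw [hv, inv_mul_cancel_right]
    rw [hrec]
    exact Z.mul_mem hvin (Subgroup.zpow_mem Z (Subgroup.mem_zpowers g) mm')
  have hv1 : v ≠ 1 := fun h => hvZ (h ▸ Z.one_mem)
  set w := g ^ (N / p) with hw
  have hwp : w ^ p = 1 := by
    rw [hw, ← pow_mul, mul_comm, hNp, ← hg]
    exact pow_orderOf_eq_one g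
  have hw1 : w ≠ 1 := by
    intro h
    have h4 : orderOf g ∣ N / p := orderOf_dvd_of_pow_eq_one h
    rw [hg] at h4
    have h5 := Nat.le_of_dvd (Nat.pos_of_ne_zero hNdp0) h4
    have hlt : N / p < N := Nat.div_lt_self (Nat.pos_of_ne_zero hN0) hp.one_lt
    omega
  rcases hK p hp w v hwp hvp with h1 | ⟨i, hi⟩
  · exact hv1 h1
  · have hvi : v ^ i = w⁻¹ := by
      rw [eq_inv_of_mul_eq_one_left (by rwa [hcomm] at hi : v ^ i * w = 1)]
    have hpi : ¬ (p ∣ i) := by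
      intro hdvd2
      obtain ⟨i', rfl⟩ := hdvd2
      rw [pow_mul, hvp, one_pow] at hvi
      exact hw1 (by rw [← inv_inv w, ← hvi, inv_one])
    have hordv : orderOf v = p := orderOf_eq_prime hvp hv1
    have hcop : Nat.Coprime i (orderOf v) := by
      rw [hordv]
      exact Nat.coprime_comm.mp (hp.coprime_iff_not_dvd.mpr hpi)
    obtain ⟨mmm, hmmm⟩ := exists_pow_eq_self_of_coprime hcop
    apply hvZ
    rw [← hmmm, hvi]
    exact Z.pow_mem (Z.inv_mem (Z.pow_mem (Subgroup.mem_zpowers g) _)) _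

private lemma f_single_pow {G B : Type} [Group G] [Ring B]
    (f : MonoidAlgebra ℚ G →+* B) (g : G) (n : ℕ) :
    f (MonoidAlgebra.single g 1) ^ n = f (MonoidAlgebra.single (g ^ n) 1) := by
  rw [← map_pow, MonoidAlgebra.single_pow, one_pow]

/-- Let `G` be a finite group and `A` an abelian subgroup such
that every subgroup of `A` is normal in `G`. Let `ℋ` be the family of subgroups
`H ≤ A` with `A/H` cyclic (i.e. some `g ∈ A` generates `A` modulo `H`) and with
the commutator subgroup of `G` not contained in `H`. Then for every
noncommutative simple ring `B`: `B` is a quotient of `ℚG` iff `B` is a quotient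
of `ℚ[G/H]` for some `H ∈ ℋ`. -/
theorem simple_quotients_via_cyclic_quotients_of_normal_abelian
    (G : Type) [Group G] [Finite G] (A : Subgroup G)
    (hab : ∀ x y : A, x * y = y * x)
    (hnormal : ∀ H : Subgroup G, H ≤ A → H.Normal)
    (B : Type) [Ring B] (hB : IsSimpleRing B) (hnc : ¬∀ u v : B, u * v = v * u) :
    (∃ f : MonoidAlgebra ℚ G →+* B, Function.Surjective f) ↔
      ∃ H : Subgroup G, H ≤ A ∧
        (∃ g ∈ A, ∀ a ∈ A, ∃ k : ℤ, a * (g ^ k)⁻¹ ∈ H) ∧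
        ¬commutator G ≤ H ∧
        ∀ [H.Normal], ∃ f : MonoidAlgebra ℚ (G ⧸ H) →+* B, Function.Surjective f := by
  classical
  haveI := hB
  constructor
  · rintro ⟨f, hf⟩
    have hval : ∀ g : G, f (MonoidAlgebra.single g 1) * f (MonoidAlgebra.single g⁻¹ 1) = 1 := by
      intro g
      rw [← map_mul, MonoidAlgebra.single_mul_single, mul_inv_cancel, one_mul,
        ← MonoidAlgebra.one_def, map_one]
    let φ : G →* Bˣ :=
      { toFun := fun g => ⟨f (MonoidAlgebra.single g 1), f (MonoidAlgebra.single g⁻¹ 1),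
          hval g, by simpa using hval g⁻¹⟩,
        map_one' := Units.ext (by
          show f (MonoidAlgebra.single (1 : G) 1) = 1
          rw [← MonoidAlgebra.one_def, map_one]),
        map_mul' := fun g h => Units.ext (by
          show f (MonoidAlgebra.single (g * h) 1) = f (MonoidAlgebra.single g 1) *
            f (MonoidAlgebra.single h 1)
          rw [← map_mul, MonoidAlgebra.single_mul_single, one_mul]) }
    have hφval : ∀ g : G, ((φ g : Bˣ) : B) = f (MonoidAlgebra.single g 1) := fun g => rfl
    refine ⟨A ⊓ φ.ker, inf_le_left, ?_, ?_, ?_⟩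
    · -- cyclicity of A modulo the kernel
      set ψ : ↥A →* Bˣ := φ.comp A.subtype with hψ
      set K := ψ.ker with hKdef
      have hKiff : ∀ t : ↥A, t ∈ K ↔ f (MonoidAlgebra.single ((t : G)) 1) = 1 := by
        intro t
        constructor
        · intro h
          have h1 : ψ t = 1 := h
          exact congrArg Units.val h1
        · intro h
          exact Units.ext h
      have hQAcomm : ∀ u v : ↥A ⧸ K, u * v = v * u := by
        intro u v
        obtain ⟨a', rfl⟩ := QuotientGroup.mk_surjective u
        obtain ⟨b', rfl⟩ := QuotientGroup.mk_surjective v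
        rw [← QuotientGroup.mk_mul, ← QuotientGroup.mk_mul, hab a' b']
      have hK : ∀ p : ℕ, p.Prime → ∀ u v : ↥A ⧸ K, u ^ p = 1 → v ^ p = 1 →
          v = 1 ∨ ∃ i : ℕ, u * v ^ i = 1 := by
        intro p hp u v hu hv
        obtain ⟨a', rfl⟩ := QuotientGroup.mk_surjective u
        obtain ⟨b', rfl⟩ := QuotientGroup.mk_surjective v
        have hu' : f (MonoidAlgebra.single ((a' : G)) 1) ^ p = 1 := by
          rw [← QuotientGroup.mk_pow] at hu
          have h2 := (hKiff _).mp ((QuotientGroup.eq_one_iff _).mp hu)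
          rw [f_single_pow]
          simpa using h2
        have hv' : f (MonoidAlgebra.single ((b' : G)) 1) ^ p = 1 := by
          rw [← QuotientGroup.mk_pow] at hv
          have h2 := (hKiff _).mp ((QuotientGroup.eq_one_iff _).mp hv)
          rw [f_single_pow]
          simpa using h2
        rcases key_or A hab hnormal f hf hp a'.2 b'.2 hu' hv' with h | ⟨i, hi⟩
        · left
          exact (QuotientGroup.eq_one_iff b').mpr ((hKiff b').mpr h)
        · right
          refine ⟨i, ?_⟩
          rw [← QuotientGroup.mk_pow, ← QuotientGroup.mk_mul, QuotientGroup.eq_one_iff,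
            hKiff]
          simpa using hi
      obtain ⟨q0, hq0⟩ := exists_generator hQAcomm hK
      obtain ⟨g0, rfl⟩ := QuotientGroup.mk_surjective q0
      refine ⟨(g0 : G), g0.2, ?_⟩
      intro a0 ha0
      obtain ⟨k, hk⟩ := Subgroup.mem_zpowers_iff.mp (hq0 (QuotientGroup.mk ⟨a0, ha0⟩))
      refine ⟨k, ?_⟩
      have helt : (⟨a0, ha0⟩ * (g0 ^ k)⁻¹ : ↥A) ∈ K := by
        have h3 : (QuotientGroup.mk (⟨a0, ha0⟩ * (g0 ^ k)⁻¹ : ↥A) : ↥A ⧸ K) = 1 := by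
          rw [QuotientGroup.mk_mul, QuotientGroup.mk_inv, QuotientGroup.mk_zpow, hk,
            mul_inv_cancel]
        exact (QuotientGroup.eq_one_iff _).mp h3
      rw [hKiff] at helt
      refine Subgroup.mem_inf.mpr ⟨A.mul_mem ha0 (A.inv_mem (A.zpow_mem g0.2 k)), ?_⟩
      rw [MonoidHom.mem_ker]
      apply Units.ext
      show f (MonoidAlgebra.single (a0 * ((g0 : G) ^ k)⁻¹) 1) = 1
      simpa using helt
    · -- commutator is not contained
      intro hle
      apply hnc
      have hsingle : ∀ g h : G, f (MonoidAlgebra.single g 1) * f (MonoidAlgebra.single h 1)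
          = f (MonoidAlgebra.single h 1) * f (MonoidAlgebra.single g 1) := by
        intro g h
        have hm : ⁅g, h⁆ ∈ A ⊓ φ.ker := hle (by
          rw [commutator_def]
          exact Subgroup.commutator_mem_commutator (Subgroup.mem_top g) (Subgroup.mem_top h))
        have h2 : ⁅φ g, φ h⁆ = 1 := by
          rw [← map_commutatorElement]
          exact hm.2
        have h1 : φ g * φ h = φ h * φ g := commutatorElement_eq_one_iff_mul_comm.mp h2
        exact congrArg Units.val h1
      have hc1 : ∀ (q : ℚ) (t : B), Commute (f (MonoidAlgebra.single (1 : G) q)) t := by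
        intro q t
        obtain ⟨s, rfl⟩ := hf t
        show f _ * f _ = f _ * f _
        rw [← map_mul, ← map_mul, MonoidAlgebra.single_one_comm]
      have hsingle' : ∀ (gg : G) (q : ℚ) (t : MonoidAlgebra ℚ G),
          f (MonoidAlgebra.single gg q) * f t = f t * f (MonoidAlgebra.single gg q) := by
        intro gg q t
        induction t using MonoidAlgebra.induction_linear with
        | zero => simp
        | add s1 s2 ih1 ih2 => rw [map_add, mul_add, add_mul, ih1, ih2]
        | single a r =>
            show f (MonoidAlgebra.single gg q) * f (MonoidAlgebra.single a r)
              = f (MonoidAlgebra.single a r) * f (MonoidAlgebra.single gg q)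
            have e1 : (MonoidAlgebra.single gg q : MonoidAlgebra ℚ G)
                = MonoidAlgebra.single 1 q * MonoidAlgebra.single gg 1 := by
              rw [MonoidAlgebra.single_mul_single, one_mul, mul_one]
            have e2 : (MonoidAlgebra.single a r : MonoidAlgebra ℚ G)
                = MonoidAlgebra.single 1 r * MonoidAlgebra.single a 1 := by
              rw [MonoidAlgebra.single_mul_single, one_mul, mul_one]
            rw [e1, e2, map_mul, map_mul]
            exact Commute.mul_left (hc1 q _)
              (Commute.mul_right (hc1 r _).symm (hsingle gg a))
      intro u v
      obtain ⟨s, rfl⟩ := hf u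
      obtain ⟨t, rfl⟩ := hf v
      induction s using MonoidAlgebra.induction_linear with
      | zero => simp
      | add s1 s2 ih1 ih2 => rw [map_add, add_mul, mul_add, ih1, ih2]
      | single a r => exact hsingle' a r t
    · -- the quotient map
      intro hnorm
      let χ : G ⧸ (A ⊓ φ.ker) →* Bˣ := QuotientGroup.lift _ φ inf_le_right
      let χ' : G ⧸ (A ⊓ φ.ker) →* B := (Units.coeHom B).comp χ
      have hcommlift : ∀ (q : ℚ) (x : G ⧸ (A ⊓ φ.ker)),
          Commute ((f.comp MonoidAlgebra.singleOneRingHom) q) (χ' x) := by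
        intro q xq
        obtain ⟨g, rfl⟩ := QuotientGroup.mk_surjective xq
        show f (MonoidAlgebra.single 1 q) * f (MonoidAlgebra.single g 1)
          = f (MonoidAlgebra.single g 1) * f (MonoidAlgebra.single 1 q)
        rw [← map_mul, ← map_mul, MonoidAlgebra.single_one_comm]
      refine ⟨MonoidAlgebra.liftNCRingHom (f.comp MonoidAlgebra.singleOneRingHom) χ' hcommlift,
        ?_⟩
      set F := MonoidAlgebra.liftNCRingHom (f.comp MonoidAlgebra.singleOneRingHom) χ' hcommlift
        with hF
      set π := MonoidAlgebra.mapDomainRingHom ℚ (QuotientGroup.mk' (A ⊓ φ.ker)) with hπ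
      have hπs : ∀ (g : G) (q : ℚ), π (MonoidAlgebra.single g q)
          = MonoidAlgebra.single (QuotientGroup.mk (s := A ⊓ φ.ker) g) q := by
        intro g q
        exact MonoidAlgebra.mapDomain_single
      have hFs : ∀ (x : G ⧸ (A ⊓ φ.ker)) (q : ℚ),
          F (MonoidAlgebra.single x q) = f (MonoidAlgebra.single 1 q) * χ' x := by
        intro x q
        exact MonoidAlgebra.liftNC_single _ _ _ _
      have heq : F.comp π = f := by
        apply MonoidAlgebra.ringHom_ext
        · intro q
          show F (π (MonoidAlgebra.single 1 q)) = f _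
          rw [hπs, hFs, QuotientGroup.mk_one, map_one, mul_one]
        · intro g
          show F (π (MonoidAlgebra.single g 1)) = f _
          rw [hπs, hFs, ← MonoidAlgebra.one_def, map_one, one_mul]
          rfl
      intro b
      obtain ⟨t, rfl⟩ := hf b
      exact ⟨π t, by rw [← heq]; rfl⟩
  · rintro ⟨H, hHA, -, -, hquot⟩
    haveI := hnormal H hHA
    obtain ⟨F, hF⟩ := hquot
    let π := MonoidAlgebra.mapDomainRingHom ℚ (QuotientGroup.mk' H)
    have hπ : Function.Surjective π := by
      intro y
      induction y using MonoidAlgebra.induction_linear with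
      | zero => exact ⟨0, map_zero _⟩
      | add s1 s2 ih1 ih2 =>
          obtain ⟨t1, ht1⟩ := ih1
          obtain ⟨t2, ht2⟩ := ih2
          exact ⟨t1 + t2, by rw [map_add, ht1, ht2]⟩
      | single a q =>
          obtain ⟨g, rfl⟩ := QuotientGroup.mk_surjective a
          exact ⟨MonoidAlgebra.single g q, MonoidAlgebra.mapDomain_single⟩
    refine ⟨F.comp π, fun b => ?_⟩
    obtain ⟨y, hy⟩ := hF b
    obtain ⟨t, ht⟩ := hπ y
    exact ⟨t, by rw [RingHom.comp_apply, ht, hy]⟩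
end
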